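/- In the signed random heap process with m columns, suppose heaps H¹ and H² are such that the sets of pieces blocking the highest piece of column 0 in H¹ and in H² have the same configuration (i.e. correspond under a bijection preserving columns and the blocking relation). Then the probability that a run of 0's started from H¹ backtracks equals the probability that a run of 0's started from H² backtracks, and for every future time the probability that the highest piece of column 0 has been annihilated by that time is the same for the process started from H¹ as for the process started from H². -/

import Mathlib

open MeasureTheory ProbabilityTheory Filter
open scoped ENNReal

namespace RandomHeap

/-- A piece of a signed heap: a height (a positive integer), a column in `ZMod m`,
and a sign (`true` for `+`, `false` for `-`). -/
structure Piece (m : ℕ) where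
  height : ℕ
  col : ZMod m
  sign : Bool
deriving DecidableEq

variable {m : ℕ}

instance : MeasurableSpace (ZMod m) := ⊤
instance : MeasurableSpace (Piece m) := ⊤
instance : MeasurableSpace (Finset (Piece m)) := ⊤

/-- The defining conditions for a finite set of pieces to be a signed heap. -/
def IsHeap (H : Finset (Piece m)) : Prop :=
  (∀ p ∈ H, 1 ≤ p.height) ∧
  (∀ p ∈ H, 1 < p.height →
      ∃ q ∈ H, q.height + 1 = p.height ∧
        (q.col = p.col - 1 ∨ q.col = p.col ∨ q.col = p.col + 1)) ∧
  (∀ p ∈ H, ∀ q ∈ H, p.height = q.height + 1 → p.col = q.col → p.sign = q.sign) ∧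
  (∀ p ∈ H, ∀ q ∈ H, q.col = p.col + 1 → p.height ≠ q.height) ∧
  (∀ p ∈ H, ∀ q ∈ H, p.height = q.height → p.col = q.col → p = q)

/-- The height of the highest piece in column `j` (0 if the column is empty). -/
def colHeight (H : Finset (Piece m)) (j : ZMod m) : ℕ :=
  (H.filter fun p => p.col = j).sup Piece.height

/-- The roof of a heap: the set of removable pieces, i.e. pieces having no piece of
greater height in their own column or either adjacent column. -/
def roof (H : Finset (Piece m)) : Finset (Piece m) :=
  H.filter fun p => ∀ q ∈ H,
    (q.col = p.col - 1 ∨ q.col = p.col ∨ q.col = p.col + 1) → q.height ≤ p.height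

open scoped Classical in
/-- One step of the signed random heap dynamics: given the draw `d = (k, s)`, if the top
piece of column `k` is strictly higher than both neighbouring columns and has sign `!s`,
it is annihilated; otherwise the piece `(max (h_{k-1}, h_k, h_{k+1}) + 1, k, s)` is added. -/
noncomputable def step (H : Finset (Piece m)) (d : ZMod m × Bool) : Finset (Piece m) :=
  if max (colHeight H (d.1 - 1)) (colHeight H (d.1 + 1)) < colHeight H d.1 ∧
      (⟨colHeight H d.1, d.1, !d.2⟩ : Piece m) ∈ H then
    H.erase ⟨colHeight H d.1, d.1, !d.2⟩
  else
    insert ⟨max (colHeight H d.1) (max (colHeight H (d.1 - 1)) (colHeight H (d.1 + 1))) + 1,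
      d.1, d.2⟩ H

/-- The heap process started from `H₀` and driven by the sequence of draws `ω`. -/
noncomputable def walk (H₀ : Finset (Piece m)) (ω : ℕ → ZMod m × Bool) : ℕ → Finset (Piece m)
  | 0 => H₀
  | n + 1 => step (walk H₀ ω n) (ω n)

/-- The roof of `H` contains a piece in column `0`. -/
def hasRoofPiece0 (H : Finset (Piece m)) : Prop := ∃ p ∈ roof H, p.col = 0

/-- The draws `U` form an i.i.d. sequence, uniform over the `2 * m` possible
(column, sign) pairs. -/
def IIDUniformDraws {Ω : Type*} [MeasurableSpace Ω] (P : Measure Ω)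
    (U : ℕ → Ω → ZMod m × Bool) : Prop :=
  (∀ n, Measurable (U n)) ∧
  iIndepFun U P ∧
  ∀ n d, P {ω | U n ω = d} = ((2 * m : ℕ) : ℝ≥0∞)⁻¹

end RandomHeap

open RandomHeap

namespace RandomHeap

variable {m : ℕ}

/-- `a` directly covers `b` in the heap `H`: both belong to `H`, `a` is strictly higher
than `b`, and `a` lies in the same column as `b` or in an adjacent one. -/
def Covers (H : Finset (Piece m)) (a b : Piece m) : Prop :=
  a ∈ H ∧ b ∈ H ∧ b.height < a.height ∧
    (a.col = b.col - 1 ∨ a.col = b.col ∨ a.col = b.col + 1)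

/-- `a` blocks `b` in the heap `H`: `a` must be annihilated before `b` can become
removable, i.e. `a` is related to `b` by a chain of direct coverings. -/
def Blocks (H : Finset (Piece m)) (a b : Piece m) : Prop :=
  Relation.TransGen (Covers H) a b

end RandomHeap
namespace RandomHeap

variable {m : ℕ}

lemma blocks_mem_left {H : Finset (Piece m)} {y z : Piece m} (h : Blocks H y z) : y ∈ H := by
  rcases (Relation.TransGen.head'_iff).1 h with ⟨b, hb, -⟩
  exact hb.1

lemma blocks_mem_right {H : Finset (Piece m)} {y z : Piece m} (h : Blocks H y z) : z ∈ H := by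
  rcases (Relation.TransGen.tail'_iff).1 h with ⟨b, -, hb⟩
  exact hb.2.1

lemma blocks_height {H : Finset (Piece m)} {y z : Piece m} (h : Blocks H y z) :
    z.height < y.height := by
  induction h with
  | single c => exact c.2.2.1
  | tail _ c ih => exact lt_trans c.2.2.1 ih

lemma blocks_irrefl {H : Finset (Piece m)} {y : Piece m} (h : Blocks H y y) : False :=
  lt_irrefl _ (blocks_height h)

lemma height_le_colHeight {H : Finset (Piece m)} {p : Piece m} (hp : p ∈ H) :
    p.height ≤ colHeight H p.col :=
  Finset.le_sup (by simp [Finset.mem_filter, hp])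

lemma exists_top {H : Finset (Piece m)} {j : ZMod m} (h : colHeight H j ≠ 0) :
    ∃ p ∈ H, p.col = j ∧ p.height = colHeight H j := by
  have hne : (H.filter fun p => p.col = j).Nonempty := by
    by_contra hc
    rw [Finset.not_nonempty_iff_eq_empty] at hc
    rw [colHeight, hc] at h
    simp at h
  obtain ⟨b, hb, he⟩ := Finset.exists_mem_eq_sup _ hne Piece.height
  rw [Finset.mem_filter] at hb
  exact ⟨b, hb.1, hb.2, he.symm⟩

lemma colHeight_lt {H : Finset (Piece m)} {j : ZMod m} {n : ℕ} (hn : 0 < n)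
    (h : ∀ p ∈ H, p.col = j → p.height < n) : colHeight H j < n := by
  rw [colHeight, Finset.sup_lt_iff (by exact hn)]
  intro b hb
  rw [Finset.mem_filter] at hb
  exact h b hb.1 hb.2

/-- The column-height removability condition at column `k`. -/
def remH (H : Finset (Piece m)) (k : ZMod m) : Prop :=
  max (colHeight H (k - 1)) (colHeight H (k + 1)) < colHeight H k

open Classical in
/-- The sign of the top piece of column `k` (junk value if the column is empty). -/
noncomputable def topSign (H : Finset (Piece m)) (k : ZMod m) : Bool :=
  if h : ∃ p, p ∈ H ∧ p.col = k ∧ p.height = colHeight H k then h.choose.sign else true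

open Classical in
/-- The sign-flip used to couple the two heap processes. -/
noncomputable def eps (H H' : Finset (Piece m)) (k : ZMod m) : Bool :=
  if remH H k ∧ remH H' k ∧ topSign H k ≠ topSign H' k then true else false

lemma step_eq_erase {H : Finset (Piece m)} {k : ZMod m} {s : Bool}
    (h1 : remH H k) (h2 : (⟨colHeight H k, k, !s⟩ : Piece m) ∈ H) :
    step H (k, s) = H.erase ⟨colHeight H k, k, !s⟩ := by
  rw [step]; exact if_pos ⟨h1, h2⟩

lemma step_eq_insert {H : Finset (Piece m)} {k : ZMod m} {s : Bool}
    (h : ¬ (remH H k ∧ (⟨colHeight H k, k, !s⟩ : Piece m) ∈ H)) :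
    step H (k, s) = insert
      ⟨max (colHeight H k) (max (colHeight H (k - 1)) (colHeight H (k + 1))) + 1, k, s⟩ H := by
  rw [step]; exact if_neg h

end RandomHeap
namespace RandomHeap

variable {m : ℕ}

lemma heap_eq_of {H : Finset (Piece m)} (hp : IsHeap H) {p q : Piece m} (hpH : p ∈ H)
    (hqH : q ∈ H) (hh : p.height = q.height) (hc : p.col = q.col) : p = q :=
  hp.2.2.2.2 p hpH q hqH hh hc

lemma heap_adj_ne {H : Finset (Piece m)} (hp : IsHeap H) {p q : Piece m} (hpH : p ∈ H)
    (hqH : q ∈ H) (hc : q.col = p.col + 1) : p.height ≠ q.height :=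
  hp.2.2.2.1 p hpH q hqH hc

/-- Two distinct pieces in the same or adjacent columns never have equal heights. -/
lemma heap_ne_height {H : Finset (Piece m)} (hp : IsHeap H) {p q : Piece m} (hpH : p ∈ H)
    (hqH : q ∈ H) (hpq : p ≠ q)
    (hc : p.col = q.col - 1 ∨ p.col = q.col ∨ p.col = q.col + 1) :
    p.height ≠ q.height := by
  rcases hc with hc | hc | hc
  · exact heap_adj_ne hp hpH hqH (by rw [hc]; ring)
  · exact fun h => hpq (heap_eq_of hp hpH hqH h hc)
  · exact (heap_adj_ne hp hqH hpH hc).symm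

theorem isHeap_step {H : Finset (Piece m)} (hone : (1 : ZMod m) ≠ 0) (hp : IsHeap H)
    (d : ZMod m × Bool) : IsHeap (step H d) := by
  obtain ⟨k, s⟩ := d
  obtain ⟨h1, h2, h3, h4, h5⟩ := hp
  by_cases hc : remH H k ∧ (⟨colHeight H k, k, !s⟩ : Piece m) ∈ H
  · rw [step_eq_erase hc.1 hc.2]
    have hsub : ∀ p : Piece m, p ∈ H.erase ⟨colHeight H k, k, !s⟩ → p ∈ H :=
      fun p h => Finset.mem_of_mem_erase h
    have hrm : max (colHeight H (k - 1)) (colHeight H (k + 1)) < colHeight H k := hc.1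
    obtain ⟨hrm1, hrm2⟩ := Nat.max_lt.mp hrm
    refine ⟨fun p h => h1 p (hsub p h), ?_, fun p h q h' => h3 p (hsub p h) q (hsub q h'),
      fun p h q h' => h4 p (hsub p h) q (hsub q h'),
      fun p h q h' => h5 p (hsub p h) q (hsub q h')⟩
    intro p hpe hph
    obtain ⟨q, hq, hqh, hqc⟩ := h2 p (hsub p hpe) hph
    refine ⟨q, Finset.mem_erase.2 ⟨?_, hq⟩, hqh, hqc⟩
    rintro rfl
    have hpH : p ∈ H := hsub p hpe
    have hpk : p.height = colHeight H k + 1 := by simpa using hqh.symm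
    rcases hqc with hcc | hcc | hcc
    · have hpc : p.col = k + 1 := by
        rw [show (k : ZMod m) = p.col - 1 from hcc]; ring
      have := height_le_colHeight hpH
      rw [hpc] at this
      omega
    · have hpc : p.col = k := hcc.symm
      have := height_le_colHeight hpH
      rw [hpc] at this
      omega
    · have hpc : p.col = k - 1 := by
        rw [show (k : ZMod m) = p.col + 1 from hcc]; ring
      have := height_le_colHeight hpH
      rw [hpc] at this
      omega
  · rw [step_eq_insert hc]
    obtain ⟨M, hM⟩ : ∃ M : ℕ,
        max (colHeight H k) (max (colHeight H (k - 1)) (colHeight H (k + 1))) = M := ⟨_, rfl⟩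
    rw [hM]
    have hMk : colHeight H k ≤ M := hM ▸ le_max_left _ _
    have hMk1 : colHeight H (k - 1) ≤ M := hM ▸ le_trans (le_max_left _ _) (le_max_right _ _)
    have hMk2 : colHeight H (k + 1) ≤ M := hM ▸ le_trans (le_max_right _ _) (le_max_right _ _)
    have hMcases : M = colHeight H k ∨ M = colHeight H (k - 1) ∨ M = colHeight H (k + 1) := by
      rw [← hM]
      rcases max_choice (colHeight H k)
        (max (colHeight H (k - 1)) (colHeight H (k + 1))) with h | h <;> rw [h]
      · left; rfl
      · rcases max_choice (colHeight H (k - 1)) (colHeight H (k + 1)) with h' | h' <;> rw [h']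
        · right; left; rfl
        · right; right; rfl
    constructor
    · intro p hp
      rcases Finset.mem_insert.1 hp with rfl | hp
      · simp
      · exact h1 p hp
    constructor
    · intro p hp hph
      rcases Finset.mem_insert.1 hp with rfl | hp
      · have hM1 : 1 ≤ M := by
          have : (⟨M + 1, k, s⟩ : Piece m).height = M + 1 := rfl
          rw [this] at hph
          omega
        rcases hMcases with h | h | h
        · obtain ⟨q, hq, hqc, hqh⟩ := exists_top (H := H) (j := k) (by omega)
          exact ⟨q, Finset.mem_insert_of_mem hq, show q.height + 1 = M + 1 by omega,
            Or.inr (Or.inl (by rw [hqc]))⟩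
        · obtain ⟨q, hq, hqc, hqh⟩ := exists_top (H := H) (j := k - 1) (by omega)
          exact ⟨q, Finset.mem_insert_of_mem hq, show q.height + 1 = M + 1 by omega,
            Or.inl (by rw [hqc])⟩
        · obtain ⟨q, hq, hqc, hqh⟩ := exists_top (H := H) (j := k + 1) (by omega)
          exact ⟨q, Finset.mem_insert_of_mem hq, show q.height + 1 = M + 1 by omega,
            Or.inr (Or.inr (by rw [hqc]))⟩
      · obtain ⟨q, hq, hqh, hqc⟩ := h2 p hp hph
        exact ⟨q, Finset.mem_insert_of_mem hq, hqh, hqc⟩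
    constructor
    · intro p hp q hq hh hcc
      rcases Finset.mem_insert.1 hp with rfl | hp <;> rcases Finset.mem_insert.1 hq with rfl | hq
      · rfl
      · have hqk : q.col = k := hcc.symm
        have hqh : q.height = M := by
          have : M + 1 = q.height + 1 := hh
          omega
        have hck : colHeight H k = M := by
          have := height_le_colHeight hq
          rw [hqk, hqh] at this
          omega
        have hrem : remH H k := by
          rw [remH, hck, Nat.max_lt]
          have hq1 : 1 ≤ q.height := h1 q hq
          constructor
          · rcases Nat.eq_zero_or_pos (colHeight H (k - 1)) with hz | hz
            · omega
            · rcases Nat.lt_or_ge (colHeight H (k - 1)) M with h | h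
              · exact h
              · exfalso
                obtain ⟨a, ha, hac, hah⟩ := exists_top (H := H) (j := k - 1) (by omega)
                have hne := heap_adj_ne ⟨h1, h2, h3, h4, h5⟩ ha hq (by rw [hqk, hac]; ring)
                exact hne (by omega)
          · rcases Nat.eq_zero_or_pos (colHeight H (k + 1)) with hz | hz
            · omega
            · rcases Nat.lt_or_ge (colHeight H (k + 1)) M with h | h
              · exact h
              · exfalso
                obtain ⟨a, ha, hac, hah⟩ := exists_top (H := H) (j := k + 1) (by omega)
                have hne := heap_adj_ne ⟨h1, h2, h3, h4, h5⟩ hq ha (by rw [hqk, hac])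
                exact hne (by omega)
        have hmem : (⟨colHeight H k, k, !s⟩ : Piece m) ∉ H := fun hm => hc ⟨hrem, hm⟩
        show s = q.sign
        by_cases hqs : q.sign = s
        · exact hqs.symm
        · exfalso
          have hqs' : q.sign = !s := by
            revert hqs; cases q.sign <;> cases s <;> simp
          apply hmem
          have : q = (⟨colHeight H k, k, !s⟩ : Piece m) := by
            cases q
            rw [Piece.mk.injEq]
            exact ⟨by rw [← hck] at hqh; exact hqh, hqk, hqs'⟩
          rw [← this]
          exact hq
      · exfalso
        have hpk : p.col = k := hcc
        have := height_le_colHeight hp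
        rw [hpk] at this
        have : p.height = M + 2 := hh
        omega
      · exact h3 p hp q hq hh hcc
    constructor
    · intro p hp q hq hcc
      rcases Finset.mem_insert.1 hp with rfl | hp <;> rcases Finset.mem_insert.1 hq with rfl | hq
      · exact absurd (left_eq_add.1 hcc) hone
      · have : q.height ≤ colHeight H (k + 1) := by
          have := height_le_colHeight hq
          rwa [show q.col = k + 1 from hcc] at this
        show (M + 1 : ℕ) ≠ q.height
        omega
      · have : p.height ≤ colHeight H (k - 1) := by
          have := height_le_colHeight hp
          rwa [show p.col = k - 1 from by
            rw [show (k : ZMod m) = p.col + 1 from hcc]; ring] at this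
        show p.height ≠ (M + 1 : ℕ)
        omega
      · exact h4 p hp q hq hcc
    · intro p hp q hq hh hcc
      rcases Finset.mem_insert.1 hp with rfl | hp <;> rcases Finset.mem_insert.1 hq with rfl | hq
      · rfl
      · exfalso
        have : q.height ≤ colHeight H k := by
          have := height_le_colHeight hq
          rwa [show q.col = k from hcc.symm] at this
        have : (M + 1 : ℕ) = q.height := hh
        omega
      · exfalso
        have : p.height ≤ colHeight H k := by
          have := height_le_colHeight hp
          rwa [show p.col = k from hcc] at this
        have : p.height = (M + 1 : ℕ) := hh
        omega
      · exact h5 p hp q hq hh hcc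

lemma mem_step_iff_of_col {H : Finset (Piece m)} {p : Piece m} {k : ZMod m} {s : Bool}
    (hcol : p.col ≠ k) : p ∈ step H (k, s) ↔ p ∈ H := by
  rw [step]
  split
  · rw [Finset.mem_erase]
    constructor
    · exact fun h => h.2
    · exact fun h => ⟨fun he => hcol (by rw [he]), h⟩
  · rw [Finset.mem_insert]
    constructor
    · rintro (rfl | h)
      · exact absurd rfl hcol
      · exact h
    · exact fun h => Or.inr h

end RandomHeap
namespace RandomHeap

variable {m : ℕ}

/-- The set of pieces blocking `x`. -/
def CluS (H : Finset (Piece m)) (x : Piece m) : Set (Piece m) := {y | Blocks H y x}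

lemma covers_blocks {H : Finset (Piece m)} {x p q : Piece m} (h : Covers H p q)
    (hq : Blocks H q x ∨ q = x) : Blocks H p x :=
  hq.elim (fun hb => Relation.TransGen.head h hb) (fun he => he ▸ Relation.TransGen.single h)

lemma blocks_trans {H : Finset (Piece m)} {x y z : Piece m} (h : Blocks H x y)
    (h' : Blocks H y z) : Blocks H x z := Relation.TransGen.trans h h'

lemma blocks_mono_erase {H : Finset (Piece m)} {a y z : Piece m}
    (h : Blocks (H.erase a) y z) : Blocks H y z :=
  Relation.TransGen.mono (r := Covers (H.erase a)) (p := Covers H) (fun _ _ hc =>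
    ⟨Finset.mem_of_mem_erase hc.1, Finset.mem_of_mem_erase hc.2.1, hc.2.2⟩) _ _ h

lemma blocks_mono_insert {H : Finset (Piece m)} {N y z : Piece m}
    (h : Blocks H y z) : Blocks (insert N H) y z :=
  Relation.TransGen.mono (r := Covers H) (p := Covers (insert N H)) (fun _ _ hc =>
    ⟨Finset.mem_insert_of_mem hc.1, Finset.mem_insert_of_mem hc.2.1, hc.2.2⟩) _ _ h

lemma blocks_erase_of {H : Finset (Piece m)} {a y z : Piece m}
    (hnc : ∀ q, ¬ Covers H q a) (h : Blocks H y z) (hy : y ≠ a) :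
    Blocks (H.erase a) y z := by
  induction h using Relation.TransGen.head_induction_on with
  | single hcov =>
    have hz : z ≠ a := fun he => hnc _ (he ▸ hcov)
    exact Relation.TransGen.single
      ⟨Finset.mem_erase.2 ⟨hy, hcov.1⟩, Finset.mem_erase.2 ⟨hz, hcov.2.1⟩, hcov.2.2⟩
  | head hcov hblk ihp =>
    rename_i a' c
    have hc : c ≠ a := fun he => hnc _ (he ▸ hcov)
    have hz : c ∈ H.erase a := Finset.mem_erase.2 ⟨hc, hcov.2.1⟩
    exact Relation.TransGen.head
      ⟨Finset.mem_erase.2 ⟨hy, hcov.1⟩, hz, hcov.2.2⟩ (ihp hc)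

lemma blocks_insert_down {H : Finset (Piece m)} {N y z : Piece m}
    (hnc : ∀ q, ¬ Covers (insert N H) q N) (h : Blocks (insert N H) y z) (hy : y ≠ N) :
    Blocks H y z := by
  induction h using Relation.TransGen.head_induction_on with
  | single hcov =>
    have hz : z ≠ N := fun he => hnc _ (he ▸ hcov)
    exact Relation.TransGen.single
      ⟨(Finset.mem_insert.1 hcov.1).resolve_left hy,
        (Finset.mem_insert.1 hcov.2.1).resolve_left hz, hcov.2.2⟩
  | head hcov hblk ihp =>
    rename_i a' c
    have hc : c ≠ N := fun he => hnc _ (he ▸ hcov)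
    exact Relation.TransGen.head
      ⟨(Finset.mem_insert.1 hcov.1).resolve_left hy,
        (Finset.mem_insert.1 hcov.2.1).resolve_left hc, hcov.2.2⟩ (ihp hc)

lemma noCover_of_top {H : Finset (Piece m)} {a : Piece m} (haH : a ∈ H)
    (hat : a.height = colHeight H a.col) (hrm : remH H a.col) : ∀ q, ¬ Covers H q a := by
  rintro q ⟨hqH, -, hlt, hcol⟩
  obtain ⟨hr1, hr2⟩ := Nat.max_lt.mp hrm
  rcases hcol with hc | hc | hc
  · have := height_le_colHeight hqH
    rw [hc] at this
    omega
  · have := height_le_colHeight hqH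
    rw [hc] at this
    omega
  · have := height_le_colHeight hqH
    rw [hc] at this
    omega

lemma noCover_insert_top {H : Finset (Piece m)} {N : Piece m}
    (hmax : ∀ p ∈ H, (p.col = N.col - 1 ∨ p.col = N.col ∨ p.col = N.col + 1) →
      p.height < N.height) : ∀ q, ¬ Covers (insert N H) q N := by
  rintro q ⟨hq, -, hlt, hcol⟩
  rcases Finset.mem_insert.1 hq with rfl | hq
  · exact lt_irrefl _ hlt
  · exact absurd hlt (not_lt.2 (le_of_lt (hmax q hq hcol)))

lemma blocks_insert_N_iff {H : Finset (Piece m)} {N z : Piece m}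
    (hnc : ∀ q, ¬ Covers (insert N H) q N) (hz : z ≠ N) :
    Blocks (insert N H) N z ↔ ∃ p ∈ H,
      (N.col = p.col - 1 ∨ N.col = p.col ∨ N.col = p.col + 1) ∧ p.height < N.height ∧
        (p = z ∨ Blocks H p z) := by
  constructor
  · intro h
    rcases (Relation.TransGen.head'_iff).1 h with ⟨p, hcov, hrest⟩
    have hp : p ≠ N := fun he => lt_irrefl _ (he ▸ hcov.2.2.1)
    refine ⟨p, (Finset.mem_insert.1 hcov.2.1).resolve_left hp, hcov.2.2.2, hcov.2.2.1, ?_⟩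
    rcases (Relation.ReflTransGen.cases_head hrest) with rfl | ⟨c, hpc, hcz⟩
    · exact Or.inl rfl
    · right
      have : Blocks (insert N H) p z :=
        Relation.TransGen.head' hpc hcz
      exact blocks_insert_down hnc this hp
  · rintro ⟨p, hpH, hcol, hht, hpz | hpz⟩
    · exact Relation.TransGen.single
        ⟨Finset.mem_insert_self _ _, Finset.mem_insert_of_mem (hpz ▸ hpH), hpz ▸ hht,
          hpz ▸ hcol⟩
    · exact Relation.TransGen.head
        ⟨Finset.mem_insert_self _ _, Finset.mem_insert_of_mem hpH, hht, hcol⟩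
        (blocks_mono_insert hpz)

end RandomHeap
namespace RandomHeap

variable {m : ℕ}

/-- The set of columns occupied by pieces blocking `x`. -/
def CC (H : Finset (Piece m)) (x : Piece m) : Set (ZMod m) :=
  {c | ∃ y, Blocks H y x ∧ y.col = c}

lemma topSign_eq {H : Finset (Piece m)} {k : ZMod m} (hH : IsHeap H) {a : Piece m}
    (haH : a ∈ H) (hac : a.col = k) (hah : a.height = colHeight H k) :
    topSign H k = a.sign := by
  rw [topSign]
  have hex : ∃ p, p ∈ H ∧ p.col = k ∧ p.height = colHeight H k := ⟨a, haH, hac, hah⟩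
  rw [dif_pos hex]
  have spec := hex.choose_spec
  have : hex.choose = a :=
    heap_eq_of hH spec.1 haH (by rw [spec.2.2, hah]) (by rw [spec.2.1, hac])
  rw [this]

lemma eps_of_not_rem {H H' : Finset (Piece m)} {k : ZMod m} (h : ¬ remH H k) :
    eps H H' k = false := by
  rw [eps, if_neg]; tauto

lemma eps_of_not_rem' {H H' : Finset (Piece m)} {k : ZMod m} (h : ¬ remH H' k) :
    eps H H' k = false := by
  rw [eps, if_neg]; tauto

lemma eps_eq_bne {H H' : Finset (Piece m)} {k : ZMod m} (h : remH H k) (h' : remH H' k) :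
    eps H H' k = (topSign H k != topSign H' k) := by
  rw [eps]
  by_cases hts : topSign H k = topSign H' k
  · rw [if_neg (by tauto), hts, bne_self_eq_false]
  · rw [if_pos ⟨h, h', hts⟩]
    exact (bne_iff_ne.2 hts).symm

/-- In a column of the cluster (or column 0), the top piece of that column blocks `x`
(or equals `x`). -/
lemma ctop_exists {H : Finset (Piece m)} {x : Piece m} {k : ZMod m} (hH : IsHeap H)
    (hx : x ∈ H) (hxc : x.col = 0) (hk : k ∈ CC H x ∨ k = 0) :
    ∃ a, (Blocks H a x ∨ a = x) ∧ a.col = k ∧ a.height = colHeight H k ∧ a ∈ H := by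
  obtain ⟨w, hw, hwc⟩ : ∃ w, (Blocks H w x ∨ w = x) ∧ w.col = k := by
    rcases hk with ⟨y, hy, hyc⟩ | rfl
    · exact ⟨y, Or.inl hy, hyc⟩
    · exact ⟨x, Or.inr rfl, hxc⟩
  have hwH : w ∈ H := hw.elim blocks_mem_left (fun he => he ▸ hx)
  have hwh : w.height ≤ colHeight H k := hwc ▸ height_le_colHeight hwH
  have hw1 : 1 ≤ w.height := hH.1 w hwH
  obtain ⟨p, hpH, hpc, hph⟩ := exists_top (H := H) (j := k) (by omega)
  refine ⟨p, ?_, hpc, hph, hpH⟩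
  rcases eq_or_lt_of_le hwh with he | hlt
  · have : w = p := heap_eq_of hH hwH hpH (by omega) (by rw [hwc, hpc])
    exact this ▸ hw
  · have hcov : Covers H p w := ⟨hpH, hwH, by omega, Or.inr (Or.inl (by rw [hpc, hwc]))⟩
    exact Or.inl (covers_blocks hcov (by tauto))

/-- Columns adjacent to the cluster (or to column 0) but not in it are strictly lower. -/
lemma col_lt_of_adj {H : Finset (Piece m)} {x : Piece m} {k j : ZMod m} (hH : IsHeap H)
    (hx : x ∈ H) (hxc : x.col = 0) (hk : k ∈ CC H x ∨ k = 0)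
    (hj : ¬ (j ∈ CC H x ∨ j = 0)) (hadj : j = k - 1 ∨ j = k + 1) :
    colHeight H j < colHeight H k := by
  obtain ⟨b, hb, hbc, hbh, hbH⟩ := ctop_exists hH hx hxc hk
  have hb1 : 1 ≤ b.height := hH.1 b hbH
  refine colHeight_lt (by omega) ?_
  intro p hpH hpc
  have hjk : j ≠ k := by
    intro he
    exact hj (he ▸ hk)
  have hpb : p ≠ b := by
    rintro rfl
    rw [hpc] at hbc
    exact hjk hbc
  by_contra hge
  push_neg at hge
  have hadj' : p.col = b.col - 1 ∨ p.col = b.col ∨ p.col = b.col + 1 := by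
    rw [hpc, hbc]
    rcases hadj with h | h
    · exact Or.inl h
    · exact Or.inr (Or.inr h)
  rcases eq_or_lt_of_le hge with he | hlt
  · exact absurd (show p.height = b.height by omega) (heap_ne_height hH hpH hbH hpb hadj')
  · have hcov : Covers H p b := ⟨hpH, hbH, by omega, hadj'⟩
    exact hj (Or.inl ⟨p, covers_blocks hcov (by tauto), hpc⟩)

/-- A column adjacent to the cluster (or column 0) which is not itself in the cluster is
never removable. -/
lemma not_remH_adj {H : Finset (Piece m)} {x : Piece m} {k j : ZMod m} (hH : IsHeap H)
    (hx : x ∈ H) (hxc : x.col = 0) (hknot : ¬ (k ∈ CC H x ∨ k = 0))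
    (hj : j ∈ CC H x ∨ j = 0) (hadj : j = k - 1 ∨ j = k + 1) : ¬ remH H k := by
  intro hrem
  obtain ⟨hr1, hr2⟩ := Nat.max_lt.mp hrem
  obtain ⟨b, hb, hbc, hbh, hbH⟩ := ctop_exists hH hx hxc hj
  have hb1 : 1 ≤ b.height := hH.1 b hbH
  have hjk : colHeight H j < colHeight H k := by
    rcases hadj with h | h
    · rw [h]; exact hr1
    · rw [h]; exact hr2
  obtain ⟨p, hpH, hpc, hph⟩ := exists_top (H := H) (j := k) (by omega)
  have hcov : Covers H p b := by
    refine ⟨hpH, hbH, by omega, ?_⟩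
    rw [hpc, hbc]
    rcases hadj with h | h
    · right; right; rw [h]; ring
    · left; rw [h]; ring
  exact hknot (Or.inl ⟨p, covers_blocks hcov (by tauto), hpc⟩)

end RandomHeap
namespace RandomHeap

variable {m : ℕ}

/-- The coupling invariant between two marked heaps: a column- and blocking-preserving
bijection between the blocking clusters. -/
structure Sim (x x' : Piece m) (H H' : Finset (Piece m)) (g : Piece m → Piece m) : Prop where
  isH : IsHeap H
  isH' : IsHeap H'
  mx : x ∈ H
  mx' : x' ∈ H'
  cx : x.col = 0
  cx' : x'.col = 0
  gx : g x = x'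
  bij : Set.BijOn g (CluS H x) (CluS H' x')
  gcol : ∀ y, Blocks H y x → (g y).col = y.col
  grel : ∀ y z, Blocks H y x → Blocks H z x → (Blocks H y z ↔ Blocks H' (g y) (g z))

namespace Sim

variable {x x' : Piece m} {H H' : Finset (Piece m)} {g : Piece m → Piece m}

lemma gblocks (S : Sim x x' H H' g) {y : Piece m} (hy : Blocks H y x) :
    Blocks H' (g y) x' := S.bij.mapsTo hy

lemma gmem (S : Sim x x' H H' g) {y : Piece m} (hy : Blocks H y x ∨ y = x) : g y ∈ H' := by
  rcases hy with hy | rfl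
  · exact blocks_mem_left (S.gblocks hy)
  · rw [S.gx]; exact S.mx'

lemma gcol' (S : Sim x x' H H' g) {y : Piece m} (hy : Blocks H y x ∨ y = x) :
    (g y).col = y.col := by
  rcases hy with hy | rfl
  · exact S.gcol y hy
  · rw [S.gx, S.cx, S.cx']

lemma gblocks' (S : Sim x x' H H' g) {y : Piece m} (hy : Blocks H y x ∨ y = x) :
    Blocks H' (g y) x' ∨ g y = x' := by
  rcases hy with hy | rfl
  · exact Or.inl (S.gblocks hy)
  · exact Or.inr S.gx

lemma grel' (S : Sim x x' H H' g) {y z : Piece m} (hy : Blocks H y x ∨ y = x)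
    (hz : Blocks H z x ∨ z = x) : Blocks H y z ↔ Blocks H' (g y) (g z) := by
  rcases hy with hy | hy <;> rcases hz with hz | hz
  · exact S.grel y z hy hz
  · subst hz
    rw [S.gx]
    exact ⟨fun _ => S.gblocks hy, fun _ => hy⟩
  · subst hy
    rw [S.gx]
    constructor
    · intro h
      exact absurd (blocks_height h) (not_lt.2 (le_of_lt (blocks_height hz)))
    · intro h
      exact absurd (blocks_height h) (not_lt.2 (le_of_lt (blocks_height (S.gblocks hz))))
  · subst hy
    subst hz
    rw [S.gx]
    exact ⟨fun h => absurd h blocks_irrefl, fun h => absurd h blocks_irrefl⟩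

lemma CCeq (S : Sim x x' H H' g) : CC H x = CC H' x' := by
  ext c
  constructor
  · rintro ⟨y, hy, rfl⟩
    exact ⟨g y, S.gblocks hy, S.gcol y hy⟩
  · rintro ⟨y', hy', rfl⟩
    obtain ⟨y, hy, rfl⟩ := S.bij.surjOn hy'
    exact ⟨y, hy, (S.gcol y hy).symm⟩

lemma clu_empty_iff (S : Sim x x' H H' g) : CluS H x = ∅ ↔ CluS H' x' = ∅ := by
  constructor
  · intro h
    rw [Set.eq_empty_iff_forall_notMem] at h ⊢
    intro y' hy'
    obtain ⟨y, hy, rfl⟩ := S.bij.surjOn hy'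
    exact h y hy
  · intro h
    rw [Set.eq_empty_iff_forall_notMem] at h ⊢
    intro y hy
    exact h (g y) (S.gblocks hy)

/-- Coupled tops: the image of the top of a cluster column is the top of the same
column in the other heap. -/
lemma ctop (S : Sim x x' H H' g) {k : ZMod m} (hk : k ∈ CC H x ∨ k = 0) :
    ∃ a, (Blocks H a x ∨ a = x) ∧ a.col = k ∧ a.height = colHeight H k ∧ a ∈ H ∧
      (g a).col = k ∧ (g a).height = colHeight H' k ∧ g a ∈ H' ∧
      (Blocks H' (g a) x' ∨ g a = x') := by
  obtain ⟨a, ha, hac, hah, haH⟩ := ctop_exists S.isH S.mx S.cx hk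
  have hk' : k ∈ CC H' x' ∨ k = 0 := by
    rcases hk with hk | hk
    · exact Or.inl (S.CCeq ▸ hk)
    · exact Or.inr hk
  obtain ⟨a', ha', hac', hah', haH'⟩ := ctop_exists S.isH' S.mx' S.cx' hk'
  have hgac : (g a).col = k := by rw [S.gcol' ha, hac]
  have hgaH : g a ∈ H' := S.gmem ha
  have hgaa : g a = a' := by
    obtain ⟨b, hb, hgb⟩ : ∃ b, (Blocks H b x ∨ b = x) ∧ g b = a' := by
      rcases ha' with ha' | rfl
      · obtain ⟨b, hb, hgb⟩ := S.bij.surjOn ha'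
        exact ⟨b, Or.inl hb, hgb⟩
      · exact ⟨x, Or.inr rfl, S.gx⟩
    have hbH : b ∈ H := by
      rcases hb with hb | rfl
      · exact blocks_mem_left hb
      · exact S.mx
    have hbc : b.col = k := by rw [← S.gcol' hb, hgb, hac']
    by_cases hba : b = a
    · rw [← hba, hgb]
    · have hbh : b.height ≠ a.height := fun he => hba (heap_eq_of S.isH hbH haH he
        (by rw [hbc, hac]))
      have hble : b.height ≤ colHeight H k := hbc ▸ height_le_colHeight hbH
      have hblk : Blocks H a b := Relation.TransGen.single
        ⟨haH, hbH, by omega, Or.inr (Or.inl (by rw [hac, hbc]))⟩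
      have hblk' : Blocks H' (g a) (g b) := (S.grel' ha hb).1 hblk
      rw [hgb] at hblk'
      have h1 := blocks_height hblk'
      have h2 : (g a).height ≤ colHeight H' k := hgac ▸ height_le_colHeight hgaH
      omega
  exact ⟨a, ha, hac, hah, haH, hgac, by rw [hgaa]; exact hah', by rw [hgaa]; exact haH',
    by rw [hgaa]; exact ha'⟩

/-- Removability transfers between coupled heaps on cluster columns and column 0. -/
lemma remH_iff (S : Sim x x' H H' g) {k : ZMod m} (hk : k ∈ CC H x ∨ k = 0) :
    remH H k ↔ remH H' k := by
  obtain ⟨a, ha, hac, hah, haH, hgac, hgah, hgaH, hga⟩ := S.ctop hk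
  have key : ∀ j, (j = k - 1 ∨ j = k + 1) →
      (colHeight H j < colHeight H k ↔ colHeight H' j < colHeight H' k) := by
    intro j hadj
    by_cases hj : j ∈ CC H x ∨ j = 0
    · obtain ⟨b, hb, hbc, hbh, hbH, hgbc, hgbh, hgbH, hgb⟩ := S.ctop hj
      have hadjc : a.col = b.col - 1 ∨ a.col = b.col ∨ a.col = b.col + 1 := by
        rw [hac, hbc]
        rcases hadj with h | h
        · right; right; rw [h]; ring
        · left; rw [h]; ring
      have hadjc' : (g a).col = (g b).col - 1 ∨ (g a).col = (g b).col ∨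
          (g a).col = (g b).col + 1 := by
        rw [hgac, hgbc]
        rcases hadj with h | h
        · right; right; rw [h]; ring
        · left; rw [h]; ring
      have h1 : colHeight H j < colHeight H k ↔ Blocks H a b := by
        constructor
        · intro h
          exact Relation.TransGen.single ⟨haH, hbH, by omega, hadjc⟩
        · intro h
          have := blocks_height h
          omega
      have h2 : colHeight H' j < colHeight H' k ↔ Blocks H' (g a) (g b) := by
        constructor
        · intro h
          exact Relation.TransGen.single ⟨hgaH, hgbH, by omega, hadjc'⟩
        · intro h
          have := blocks_height h
          omega
      rw [h1, h2]
      exact S.grel' ha hb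
    · have c1 : colHeight H j < colHeight H k := col_lt_of_adj S.isH S.mx S.cx hk hj hadj
      have c2 : colHeight H' j < colHeight H' k := by
        refine col_lt_of_adj S.isH' S.mx' S.cx' ?_ ?_ hadj
        · rcases hk with hk | hk
          · exact Or.inl (S.CCeq ▸ hk)
          · exact Or.inr hk
        · rw [← S.CCeq]
          exact hj
      exact ⟨fun _ => c2, fun _ => c1⟩
  rw [remH, remH, Nat.max_lt, Nat.max_lt,
    key (k - 1) (Or.inl rfl), key (k + 1) (Or.inr rfl)]

end Sim

end RandomHeap
namespace RandomHeap

variable {m : ℕ}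

lemma bijOn_diff {α β : Type*} {f : α → β} {S : Set α} {T : Set β} (h : Set.BijOn f S T)
    {a : α} (ha : a ∈ S) : Set.BijOn f (S \ {a}) (T \ {f a}) := by
  refine ⟨?_, h.injOn.mono Set.diff_subset, ?_⟩
  · rintro y ⟨hy, hya⟩
    refine ⟨h.mapsTo hy, ?_⟩
    simp only [Set.mem_singleton_iff] at hya ⊢
    exact fun he => hya (h.injOn hy ha he)
  · rintro t ⟨ht, hta⟩
    obtain ⟨y, hy, rfl⟩ := h.surjOn ht
    simp only [Set.mem_singleton_iff] at hta
    exact ⟨y, ⟨hy, fun he => hta (by rw [he])⟩, rfl⟩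

lemma clu_erase_eq {H : Finset (Piece m)} {x a : Piece m}
    (hnc : ∀ q, ¬ Covers H q a) (hax : x ≠ a) :
    CluS (H.erase a) x = CluS H x \ {a} := by
  ext y
  constructor
  · intro hy
    have hb : Blocks H y x := blocks_mono_erase hy
    have hya : y ≠ a := by
      have := blocks_mem_left hy
      exact (Finset.mem_erase.1 this).1
    exact ⟨hb, hya⟩
  · rintro ⟨hb, hya⟩
    exact blocks_erase_of hnc hb hya

lemma blocks_to_uncovered {G : Finset (Piece m)} {N w : Piece m}
    (hnc : ∀ q, ¬ Covers G q N) (h : Blocks G w N) : False := by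
  rcases (Relation.TransGen.tail'_iff).1 h with ⟨b, -, hb⟩
  exact hnc b hb

lemma erase_effect {H : Finset (Piece m)} (hH : IsHeap H) {k : ZMod m} {s : Bool}
    (hb : remH H k) (hmem : (⟨colHeight H k, k, !s⟩ : Piece m) ∈ H) :
    ∃ a, step H (k, s) = H.erase a ∧ a ∈ H ∧ a.col = k ∧ a.sign = !s ∧
      a.height = colHeight H k ∧ (∀ q, ¬ Covers H q a) ∧
      (∀ y z, y ≠ a → (Blocks (H.erase a) y z ↔ Blocks H y z)) := by
  refine ⟨⟨colHeight H k, k, !s⟩, step_eq_erase hb hmem, hmem, rfl, rfl, rfl, ?_, ?_⟩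
  · exact noCover_of_top hmem rfl hb
  · intro y z hy
    exact ⟨blocks_mono_erase, fun h => blocks_erase_of (noCover_of_top hmem rfl hb) h hy⟩

lemma insert_effect {H : Finset (Piece m)} {x : Piece m} (hx : x ∈ H) {k : ZMod m} {s : Bool}
    (hnb : ¬ (remH H k ∧ (⟨colHeight H k, k, !s⟩ : Piece m) ∈ H)) :
    ∃ N : Piece m, step H (k, s) = insert N H ∧ N ∉ H ∧ N.col = k ∧ N.sign = s ∧
      x ∈ step H (k, s) ∧ x ≠ N ∧
      (∀ q, ¬ Covers (insert N H) q N) ∧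
      (∀ y z, y ≠ N → (Blocks (insert N H) y z ↔ Blocks H y z)) ∧
      (∀ z, z ≠ N → (Blocks (insert N H) N z ↔ ∃ p ∈ H,
        (N.col = p.col - 1 ∨ N.col = p.col ∨ N.col = p.col + 1) ∧ (p = z ∨ Blocks H p z))) := by
  set N : Piece m :=
    ⟨max (colHeight H k) (max (colHeight H (k - 1)) (colHeight H (k + 1))) + 1, k, s⟩ with hN
  have hstep : step H (k, s) = insert N H := step_eq_insert hnb
  have hNh : N.height = max (colHeight H k) (max (colHeight H (k - 1)) (colHeight H (k + 1))) + 1 :=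
    rfl
  have hNc : N.col = k := rfl
  have hmax : ∀ p ∈ H, (N.col = p.col - 1 ∨ N.col = p.col ∨ N.col = p.col + 1) →
      p.height < N.height := by
    intro p hp hcol
    rcases hcol with hc | hc | hc
    · have hpc : p.col = k + 1 := by
        rw [show (k : ZMod m) = p.col - 1 from hNc ▸ hc]; ring
      have := height_le_colHeight hp
      rw [hpc] at this
      rw [hNh]
      omega
    · have hpc : p.col = k := hNc ▸ hc.symm
      have := height_le_colHeight hp
      rw [hpc] at this
      rw [hNh]
      omega
    · have hpc : p.col = k - 1 := by
        rw [show (k : ZMod m) = p.col + 1 from hNc ▸ hc]; ring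
      have := height_le_colHeight hp
      rw [hpc] at this
      rw [hNh]
      omega
  have hNH : N ∉ H := by
    intro hmem
    have := height_le_colHeight hmem
    rw [hNc] at this
    rw [hNh] at this
    omega
  have hmax2 : ∀ p ∈ H, (p.col = N.col - 1 ∨ p.col = N.col ∨ p.col = N.col + 1) →
      p.height < N.height := by
    intro p hp hc
    refine hmax p hp ?_
    rcases hc with hc | hc | hc
    · right; right; rw [hc]; ring
    · right; left; exact hc.symm
    · left; rw [hc]; ring
  have hnc : ∀ q, ¬ Covers (insert N H) q N := noCover_insert_top hmax2
  have hxN : x ≠ N := fun he => hNH (he ▸ hx)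
  refine ⟨N, hstep, hNH, hNc, rfl, ?_, hxN, hnc, ?_, ?_⟩
  · rw [hstep]
    exact Finset.mem_insert_of_mem hx
  · intro y z hy
    exact ⟨fun h => blocks_insert_down hnc h hy, blocks_mono_insert⟩
  · intro z hz
    rw [blocks_insert_N_iff hnc hz]
    constructor
    · rintro ⟨p, hp, hcol, -, hpz⟩
      exact ⟨p, hp, hcol, hpz⟩
    · rintro ⟨p, hp, hcol, hpz⟩
      exact ⟨p, hp, hcol, hmax p hp hcol, hpz⟩

end RandomHeap
namespace RandomHeap

variable {m : ℕ}

lemma win_congr {a b a' b' : ZMod m} (ha : a = a') (hb : b = b')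
    (h : a = b - 1 ∨ a = b ∨ a = b + 1) : a' = b' - 1 ∨ a' = b' ∨ a' = b' + 1 := by
  subst ha; subst hb; exact h

lemma far_effect {H : Finset (Piece m)} {x : Piece m} (hH : IsHeap H) (hx : x ∈ H)
    (hxc : x.col = 0) {k : ZMod m}
    (hk : ¬ (k ∈ CC H x ∨ k = 0))
    (hadj : ¬ ∃ j, (j ∈ CC H x ∨ j = 0) ∧ (j = k - 1 ∨ j = k + 1)) (s : Bool) :
    x ∈ step H (k, s) ∧
    (∀ y, Blocks (step H (k, s)) y x ↔ Blocks H y x) ∧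
    (∀ y z, (Blocks H y x ∨ y = x) → (Blocks H z x ∨ z = x) →
      (Blocks (step H (k, s)) y z ↔ Blocks H y z)) := by
  have hmemx : ∀ y, (Blocks H y x ∨ y = x) → y ∈ H := fun y hy =>
    hy.elim blocks_mem_left (fun h => h ▸ hx)
  by_cases hcond : remH H k ∧ (⟨colHeight H k, k, !s⟩ : Piece m) ∈ H
  · obtain ⟨a, hstep, haH, hac, -, -, hnc, htrans⟩ := erase_effect hH hcond.1 hcond.2
    rw [hstep]
    have hne : ∀ y, (Blocks H y x ∨ y = x) → y ≠ a := by
      intro y hy he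
      subst he
      rcases hy with hy | hy
      · exact hk (Or.inl ⟨y, hy, hac⟩)
      · exact hk (Or.inr (by rw [← hac, hy, hxc]))
    refine ⟨Finset.mem_erase.2 ⟨hne x (Or.inr rfl), hx⟩, ?_, ?_⟩
    · intro y
      constructor
      · exact fun hy => blocks_mono_erase hy
      · exact fun hy => blocks_erase_of hnc hy (hne y (Or.inl hy))
    · intro y z hy hz
      exact htrans y z (hne y hy)
  · obtain ⟨N, hstep, hNH, hNc, -, hmemstep, hxN, hnc, htrans, hNiff⟩ := insert_effect hx hcond
    have hneN : ∀ y, (Blocks H y x ∨ y = x) → y ≠ N := fun y hy he => hNH (he ▸ hmemx y hy)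
    rw [hstep]
    refine ⟨by rw [← hstep]; exact hmemstep, ?_, ?_⟩
    · intro y
      by_cases hyN : y = N
      · subst hyN
        constructor
        · intro hblk
          exfalso
          rw [hNiff x hxN] at hblk
          obtain ⟨p, hp, hcol, hpx⟩ := hblk
          have hjm : p.col ∈ CC H x ∨ p.col = 0 := by
            rcases hpx with rfl | hpx
            · right; exact hxc
            · left; exact ⟨p, hpx, rfl⟩
          rcases hcol with hc | hc | hc
          · exact hadj ⟨p.col, hjm,
              Or.inr (by rw [show (k : ZMod m) = p.col - 1 from hNc ▸ hc]; ring)⟩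
          · have hpk : p.col = k := (hNc ▸ hc).symm
            rw [hpk] at hjm
            exact hk hjm
          · exact hadj ⟨p.col, hjm,
              Or.inl (by rw [show (k : ZMod m) = p.col + 1 from hNc ▸ hc]; ring)⟩
        · intro hblk
          exact absurd (blocks_mem_left hblk) hNH
      · exact htrans y x hyN
    · intro y z hy hz
      exact htrans y z (hneN y hy)

namespace Sim

variable {x x' : Piece m} {H H' : Finset (Piece m)} {g : Piece m → Piece m}

lemma ginj' (S : Sim x x' H H' g) {p q : Piece m} (hp : Blocks H p x ∨ p = x)
    (hq : Blocks H q x ∨ q = x) (he : g p = g q) : p = q := by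
  rcases hp with hp | hp <;> rcases hq with hq | hq
  · exact S.bij.injOn hp hq he
  · exfalso
    subst hq
    have := S.gblocks hp
    rw [he, S.gx] at this
    exact blocks_irrefl this
  · exfalso
    subst hp
    have := S.gblocks hq
    rw [← he, S.gx] at this
    exact blocks_irrefl this
  · rw [hp, hq]

lemma join_sim (hone : (1 : ZMod m) ≠ 0) (S : Sim x x' H H' g) {k : ZMod m} {s s' : Bool}
    (hnb : ¬ (remH H k ∧ (⟨colHeight H k, k, !s⟩ : Piece m) ∈ H))
    (hnb' : ¬ (remH H' k ∧ (⟨colHeight H' k, k, !s'⟩ : Piece m) ∈ H'))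
    (hj : ∃ j, (j ∈ CC H x ∨ j = 0) ∧ (j = k - 1 ∨ j = k ∨ j = k + 1)) :
    ∃ g', Sim x x' (step H (k, s)) (step H' (k, s')) g' := by
  obtain ⟨N, hstep, hNH, hNc, -, hxstep, hxN, hnc, htrans, hNiff⟩ := insert_effect S.mx hnb
  obtain ⟨N', hstep', hNH', hNc', -, hxstep', hxN', hnc', htrans', hNiff'⟩ :=
    insert_effect S.mx' hnb'
  have hmemx : ∀ y, (Blocks H y x ∨ y = x) → y ∈ H := fun y hy =>
    hy.elim blocks_mem_left (fun h => h ▸ S.mx)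
  have hmemx' : ∀ y, (Blocks H' y x' ∨ y = x') → y ∈ H' := fun y hy =>
    hy.elim blocks_mem_left (fun h => h ▸ S.mx')
  have hneN : ∀ y, (Blocks H y x ∨ y = x) → y ≠ N := fun y hy he => hNH (he ▸ hmemx y hy)
  have hneN' : ∀ y, (Blocks H' y x' ∨ y = x') → y ≠ N' := fun y hy he =>
    hNH' (he ▸ hmemx' y hy)
  have hupd : ∀ y, y ≠ N → Function.update g N N' y = g y := fun y hy =>
    Function.update_of_ne hy _ _
  have hupdN : Function.update g N N' N = N' := Function.update_self _ _ _
  -- `N` joins the cluster, in both heaps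
  have hNblk : Blocks (insert N H) N x := by
    rw [hNiff x hxN]
    obtain ⟨j, hjm, hjadj⟩ := hj
    obtain ⟨w, hw, hwc⟩ : ∃ w, (Blocks H w x ∨ w = x) ∧ w.col = j := by
      rcases hjm with ⟨y, hy, hyc⟩ | rfl
      · exact ⟨y, Or.inl hy, hyc⟩
      · exact ⟨x, Or.inr rfl, S.cx⟩
    refine ⟨w, hmemx w hw, ?_, hw.symm⟩
    rcases hjadj with h | h | h
    · exact Or.inr (Or.inr (by rw [hNc, hwc, h]; ring))
    · exact Or.inr (Or.inl (by rw [hNc, hwc, h]))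
    · exact Or.inl (by rw [hNc, hwc, h]; ring)
  have hj' : ∃ j, (j ∈ CC H' x' ∨ j = 0) ∧ (j = k - 1 ∨ j = k ∨ j = k + 1) := by
    obtain ⟨j, hjm, hjadj⟩ := hj
    refine ⟨j, ?_, hjadj⟩
    rcases hjm with hjm | hjm
    · exact Or.inl (S.CCeq ▸ hjm)
    · exact Or.inr hjm
  have hNblk' : Blocks (insert N' H') N' x' := by
    rw [hNiff' x' hxN']
    obtain ⟨j, hjm, hjadj⟩ := hj'
    obtain ⟨w, hw, hwc⟩ : ∃ w, (Blocks H' w x' ∨ w = x') ∧ w.col = j := by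
      rcases hjm with ⟨y, hy, hyc⟩ | rfl
      · exact ⟨y, Or.inl hy, hyc⟩
      · exact ⟨x', Or.inr rfl, S.cx'⟩
    refine ⟨w, hmemx' w hw, ?_, hw.symm⟩
    rcases hjadj with h | h | h
    · exact Or.inr (Or.inr (by rw [hNc', hwc, h]; ring))
    · exact Or.inr (Or.inl (by rw [hNc', hwc, h]))
    · exact Or.inl (by rw [hNc', hwc, h]; ring)
  -- classification of the new cluster
  have hcls : ∀ y, Blocks (insert N H) y x ↔ (y = N ∨ Blocks H y x) := by
    intro y
    by_cases hyN : y = N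
    · subst hyN
      exact ⟨fun _ => Or.inl rfl, fun _ => hNblk⟩
    · rw [htrans y x hyN]
      exact ⟨fun h => Or.inr h, fun h => h.resolve_left hyN⟩
  have hcls' : ∀ y, Blocks (insert N' H') y x' ↔ (y = N' ∨ Blocks H' y x') := by
    intro y
    by_cases hyN : y = N'
    · subst hyN
      exact ⟨fun _ => Or.inl rfl, fun _ => hNblk'⟩
    · rw [htrans' y x' hyN]
      exact ⟨fun h => Or.inr h, fun h => h.resolve_left hyN⟩
  -- the key bridging fact for pairs (N, z)
  have hbridge : ∀ z, Blocks H z x →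
      (Blocks (insert N H) N z ↔ Blocks (insert N' H') N' (g z)) := by
    intro z hz
    have hzN : z ≠ N := hneN z (Or.inl hz)
    have hgzN' : g z ≠ N' := hneN' (g z) (Or.inl (S.gblocks hz))
    rw [hNiff z hzN, hNiff' (g z) hgzN']
    constructor
    · rintro ⟨p, hpH, hcol, hcond⟩
      have hpcl : Blocks H p x ∨ p = x := by
        rcases hcond with rfl | hpz
        · exact Or.inl hz
        · exact Or.inl (blocks_trans hpz hz)
      refine ⟨g p, S.gmem hpcl, ?_, ?_⟩
      · exact win_congr (by rw [hNc, hNc']) (S.gcol' hpcl).symm hcol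
      · rcases hcond with rfl | hpz
        · exact Or.inl rfl
        · exact Or.inr ((S.grel' hpcl (Or.inl hz)).1 hpz)
    · rintro ⟨p', hpH', hcol', hcond'⟩
      have hpcl' : Blocks H' p' x' ∨ p' = x' := by
        rcases hcond' with rfl | hpz
        · exact Or.inl (S.gblocks hz)
        · exact Or.inl (blocks_trans hpz (S.gblocks hz))
      obtain ⟨p, hpcl, hgp⟩ : ∃ p, (Blocks H p x ∨ p = x) ∧ g p = p' := by
        rcases hpcl' with h | h
        · obtain ⟨p, hp, hgp⟩ := S.bij.surjOn h
          exact ⟨p, Or.inl hp, hgp⟩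
        · exact ⟨x, Or.inr rfl, by rw [S.gx, h]⟩
      subst hgp
      refine ⟨p, hmemx p hpcl, ?_, ?_⟩
      · exact win_congr (by rw [hNc, hNc']) (S.gcol' hpcl) hcol'
      · rcases hcond' with he | hpz
        · exact Or.inl (S.ginj' hpcl (Or.inl hz) he)
        · exact Or.inr ((S.grel' hpcl (Or.inl hz)).2 hpz)
  refine ⟨Function.update g N N', ?_⟩
  refine ⟨isHeap_step hone S.isH _, isHeap_step hone S.isH' _, hxstep, hxstep', S.cx, S.cx',
    by rw [hupd x hxN, S.gx], ?_, ?_, ?_⟩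
  · -- BijOn
    rw [hstep, hstep']
    constructor
    · -- MapsTo
      intro y hy
      rcases (hcls y).1 (show Blocks (insert N H) y x from hy) with hyN | hy
      · rw [hyN, hupdN]
        exact hNblk'
      · show Blocks (insert N' H') _ x'
        rw [hupd y (hneN y (Or.inl hy))]
        exact blocks_mono_insert (S.gblocks hy)
    constructor
    · -- InjOn
      intro y hy z hz he
      rcases (hcls y).1 (show Blocks (insert N H) y x from hy) with hyN | hy <;>
        rcases (hcls z).1 (show Blocks (insert N H) z x from hz) with hzN | hz
      · rw [hyN, hzN]
      · exfalso
        rw [hyN, hupdN, hupd z (hneN z (Or.inl hz))] at he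
        have := S.gblocks hz
        rw [← he] at this
        exact hNH' (blocks_mem_left this)
      · exfalso
        rw [hzN, hupdN, hupd y (hneN y (Or.inl hy))] at he
        have := S.gblocks hy
        rw [he] at this
        exact hNH' (blocks_mem_left this)
      · rw [hupd y (hneN y (Or.inl hy)), hupd z (hneN z (Or.inl hz))] at he
        exact S.bij.injOn hy hz he
    · -- SurjOn
      intro t ht
      rcases (hcls' t).1 (show Blocks (insert N' H') t x' from ht) with htN | ht
      · refine ⟨N, show Blocks (insert N H) N x from (hcls N).2 (Or.inl rfl), ?_⟩
        rw [hupdN, htN]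
      · obtain ⟨y, hy, hgy⟩ := S.bij.surjOn ht
        refine ⟨y, show Blocks (insert N H) y x from (hcls y).2 (Or.inr hy), ?_⟩
        rw [hupd y (hneN y (Or.inl hy)), hgy]
  · -- column preservation
    intro y hy
    rw [hstep] at hy
    rcases (hcls y).1 hy with hyN | hy
    · rw [hyN, hupdN, hNc', hNc]
    · rw [hupd y (hneN y (Or.inl hy))]
      exact S.gcol y hy
  · -- relation preservation
    intro y z hy hz
    rw [hstep] at hy hz
    rw [hstep, hstep']
    rcases (hcls y).1 hy with hyN | hy2 <;> rcases (hcls z).1 hz with hzN | hz2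
    · rw [hyN, hzN, hupdN]
      exact ⟨fun h => absurd h blocks_irrefl, fun h => absurd h blocks_irrefl⟩
    · rw [hyN, hupdN, hupd z (hneN z (Or.inl hz2))]
      exact hbridge z hz2
    · rw [hzN, hupdN, hupd y (hneN y (Or.inl hy2))]
      exact ⟨fun h => absurd h (fun h => blocks_to_uncovered hnc h),
        fun h => absurd h (fun h => blocks_to_uncovered hnc' h)⟩
    · rw [hupd y (hneN y (Or.inl hy2)), hupd z (hneN z (Or.inl hz2))]
      rw [htrans y z (hneN y (Or.inl hy2)),
        htrans' (g y) (g z) (hneN' (g y) (Or.inl (S.gblocks hy2)))]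
      exact S.grel y z hy2 hz2

end Sim

end RandomHeap
namespace RandomHeap

variable {m : ℕ}

lemma piece_eq {p : Piece m} {h : ℕ} {c : ZMod m} {sg : Bool} (hh : p.height = h)
    (hc : p.col = c) (hs : p.sign = sg) : p = ⟨h, c, sg⟩ := by
  cases p
  rw [Piece.mk.injEq]
  exact ⟨hh, hc, hs⟩

namespace Sim

variable {x x' : Piece m} {H H' : Finset (Piece m)} {g : Piece m → Piece m}

lemma erase_sim (hone : (1 : ZMod m) ≠ 0) (S : Sim x x' H H' g) {a : Piece m} {k : ZMod m}
    {s s' : Bool} (ha : Blocks H a x)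
    (hstep : step H (k, s) = H.erase a) (hstep' : step H' (k, s') = H'.erase (g a))
    (hnc : ∀ q, ¬ Covers H q a) (hnc' : ∀ q, ¬ Covers H' q (g a)) :
    ∃ g', Sim x x' (step H (k, s)) (step H' (k, s')) g' := by
  have hax : x ≠ a := fun he => blocks_irrefl (he ▸ ha)
  have hgax' : x' ≠ g a := fun he => blocks_irrefl (he ▸ S.gblocks ha)
  have hclu : CluS (H.erase a) x = CluS H x \ {a} := clu_erase_eq hnc hax
  have hclu' : CluS (H'.erase (g a)) x' = CluS H' x' \ {g a} := clu_erase_eq hnc' hgax'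
  refine ⟨g, isHeap_step hone S.isH _, isHeap_step hone S.isH' _,
    by rw [hstep]; exact Finset.mem_erase.2 ⟨hax, S.mx⟩,
    by rw [hstep']; exact Finset.mem_erase.2 ⟨hgax', S.mx'⟩, S.cx, S.cx', S.gx, ?_, ?_, ?_⟩
  · rw [hstep, hstep', hclu, hclu']
    exact bijOn_diff S.bij ha
  · intro y hy
    rw [hstep] at hy
    exact S.gcol y (blocks_mono_erase hy)
  · intro y z hy hz
    rw [hstep] at hy hz
    rw [hstep, hstep']
    have hy' : Blocks H y x := blocks_mono_erase hy
    have hz' : Blocks H z x := blocks_mono_erase hz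
    have hya : y ≠ a := (Finset.mem_erase.1 (blocks_mem_left hy)).1
    have hgya : g y ≠ g a := S.bij.injOn.ne hy' ha hya
    constructor
    · intro h
      exact blocks_erase_of hnc' ((S.grel y z hy' hz').1 (blocks_mono_erase h)) hgya
    · intro h
      exact blocks_erase_of hnc ((S.grel y z hy' hz').2 (blocks_mono_erase h)) hya

theorem step_couple (hone : (1 : ZMod m) ≠ 0) (S : Sim x x' H H' g) (k : ZMod m) (s : Bool) :
    (∃ g', Sim x x' (step H (k, s)) (step H' (k, xor (eps H H' k) s)) g') ∨
    (x ∉ step H (k, s) ∧ x' ∉ step H' (k, xor (eps H H' k) s)) := by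
  by_cases hk : k ∈ CC H x ∨ k = 0
  · obtain ⟨a, ha, hac, hah, haH, hgac, hgah, hgaH, hga⟩ := S.ctop hk
    by_cases hrem : remH H k
    · have hrem' : remH H' k := (S.remH_iff hk).1 hrem
      have heps : eps H H' k = (a.sign != (g a).sign) := by
        rw [eps_eq_bne hrem hrem', topSign_eq S.isH haH hac hah,
          topSign_eq S.isH' hgaH hgac hgah]
      by_cases hsa : a.sign = !s
      · -- both heaps annihilate their top piece at column k
        have haeq : a = (⟨colHeight H k, k, !s⟩ : Piece m) := piece_eq hah hac hsa
        have hmem : (⟨colHeight H k, k, !s⟩ : Piece m) ∈ H := haeq ▸ haH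
        have hstep : step H (k, s) = H.erase a := by
          rw [step_eq_erase hrem hmem, ← haeq]
        have hsga : (g a).sign = !(xor (eps H H' k) s) := by
          rw [heps, hsa]
          rcases Bool.eq_false_or_eq_true (g a).sign with h | h <;>
            rw [h] <;> cases s <;> simp
        have hgaeq : g a = (⟨colHeight H' k, k, !(xor (eps H H' k) s)⟩ : Piece m) :=
          piece_eq hgah hgac hsga
        have hmem' : (⟨colHeight H' k, k, !(xor (eps H H' k) s)⟩ : Piece m) ∈ H' :=
          hgaeq ▸ hgaH
        have hstep' : step H' (k, xor (eps H H' k) s) = H'.erase (g a) := by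
          rw [step_eq_erase hrem' hmem', ← hgaeq]
        have hnc : ∀ q, ¬ Covers H q a :=
          noCover_of_top haH (by rw [hac]; exact hah) (by rw [hac]; exact hrem)
        have hnc' : ∀ q, ¬ Covers H' q (g a) :=
          noCover_of_top hgaH (by rw [hgac]; exact hgah) (by rw [hgac]; exact hrem')
        rcases ha with hacl | hax
        · exact Or.inl (S.erase_sim hone hacl hstep hstep' hnc hnc')
        · right
          constructor
          · rw [hstep, hax]
            exact Finset.notMem_erase _ _
          · rw [hstep', hax, S.gx]
            exact Finset.notMem_erase _ _
      · -- removable position but wrong sign: both heaps add a piece at column k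
        have hnomem : (⟨colHeight H k, k, !s⟩ : Piece m) ∉ H := by
          intro hmem
          apply hsa
          have he : (⟨colHeight H k, k, !s⟩ : Piece m) = a :=
            heap_eq_of S.isH hmem haH hah.symm hac.symm
          rw [← he]
        have hsa2 : a.sign = s := by
          revert hsa; cases s <;> cases h : a.sign <;> simp
        have hga_sign : (g a).sign ≠ !(xor (eps H H' k) s) := by
          rw [heps, hsa2]
          rcases Bool.eq_false_or_eq_true (g a).sign with h | h <;>
            rw [h] <;> cases s <;> simp
        have hnomem' : (⟨colHeight H' k, k, !(xor (eps H H' k) s)⟩ : Piece m) ∉ H' := by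
          intro hmem
          apply hga_sign
          have he : (⟨colHeight H' k, k, !(xor (eps H H' k) s)⟩ : Piece m) = g a :=
            heap_eq_of S.isH' hmem hgaH hgah.symm hgac.symm
          rw [← he]
        exact Or.inl (S.join_sim hone (fun h => hnomem h.2) (fun h => hnomem' h.2)
          ⟨k, hk, Or.inr (Or.inl rfl)⟩)
    · have hrem' : ¬ remH H' k := fun h => hrem ((S.remH_iff hk).2 h)
      exact Or.inl (S.join_sim hone (fun h => hrem h.1) (fun h => hrem' h.1)
        ⟨k, hk, Or.inr (Or.inl rfl)⟩)
  · have hk2 : ¬ (k ∈ CC H' x' ∨ k = 0) := by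
      rw [← S.CCeq]
      exact hk
    by_cases hadj : ∃ j, (j ∈ CC H x ∨ j = 0) ∧ (j = k - 1 ∨ j = k + 1)
    · obtain ⟨j, hjm, hjadj⟩ := hadj
      have h1 : ¬ remH H k := not_remH_adj S.isH S.mx S.cx hk hjm hjadj
      have hjm' : j ∈ CC H' x' ∨ j = 0 := by
        rcases hjm with hjm | hjm
        · exact Or.inl (S.CCeq ▸ hjm)
        · exact Or.inr hjm
      have h2 : ¬ remH H' k := not_remH_adj S.isH' S.mx' S.cx' hk2 hjm' hjadj
      refine Or.inl (S.join_sim hone (fun h => h1 h.1) (fun h => h2 h.1) ⟨j, hjm, ?_⟩)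
      rcases hjadj with h | h
      · exact Or.inl h
      · exact Or.inr (Or.inr h)
    · left
      have hadj2 : ¬ ∃ j, (j ∈ CC H' x' ∨ j = 0) ∧ (j = k - 1 ∨ j = k + 1) := by
        rintro ⟨j, hjm, hjadj⟩
        refine hadj ⟨j, ?_, hjadj⟩
        rcases hjm with hjm | hjm
        · exact Or.inl (S.CCeq ▸ hjm)
        · exact Or.inr hjm
      obtain ⟨hx1, hcl1, htr1⟩ := far_effect S.isH S.mx S.cx hk hadj s
      obtain ⟨hx2, hcl2, htr2⟩ :=
        far_effect S.isH' S.mx' S.cx' hk2 hadj2 (xor (eps H H' k) s)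
      refine ⟨g, isHeap_step hone S.isH _, isHeap_step hone S.isH' _, hx1, hx2,
        S.cx, S.cx', S.gx, ?_, ?_, ?_⟩
      · have e1 : CluS (step H (k, s)) x = CluS H x := Set.ext (fun y => hcl1 y)
        have e2 : CluS (step H' (k, xor (eps H H' k) s)) x' = CluS H' x' :=
          Set.ext (fun y => hcl2 y)
        rw [e1, e2]
        exact S.bij
      · intro y hy
        exact S.gcol y ((hcl1 y).1 hy)
      · intro y z hy hz
        have hy' := (hcl1 y).1 hy
        have hz' := (hcl1 z).1 hz
        rw [htr1 y z (Or.inl hy') (Or.inl hz'),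
          htr2 (g y) (g z) (Or.inl (S.gblocks hy')) (Or.inl (S.gblocks hz'))]
        exact S.grel y z hy' hz'

end Sim

end RandomHeap
namespace RandomHeap

variable {m : ℕ}

lemma roof0_iff {H : Finset (Piece m)} {x : Piece m} (hH : IsHeap H) (hx : x ∈ H)
    (hxc : x.col = 0) (clean : ∀ p ∈ H, p.col = 0 → p.height ≤ x.height) :
    hasRoofPiece0 H ↔ CluS H x = ∅ := by
  constructor
  · rintro ⟨p, hp, hpc⟩
    rw [roof, Finset.mem_filter] at hp
    obtain ⟨hpH, hroof⟩ := hp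
    rw [Set.eq_empty_iff_forall_notMem]
    intro y hy
    have hy' : Blocks H y x := hy
    rcases (Relation.TransGen.tail'_iff).1 hy' with ⟨b, -, hb⟩
    have hph : p.height ≤ x.height := clean p hpH hpc
    have hadj : b.col = p.col - 1 ∨ b.col = p.col ∨ b.col = p.col + 1 := by
      rw [hpc, ← hxc]
      exact hb.2.2.2
    have hble : b.height ≤ p.height := hroof b hb.1 hadj
    have := hb.2.2.1
    omega
  · intro hempty
    refine ⟨x, ?_, hxc⟩
    rw [roof, Finset.mem_filter]
    refine ⟨hx, ?_⟩
    intro q hq hqc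
    by_contra hgt
    push_neg at hgt
    have hblk : Blocks H q x := Relation.TransGen.single ⟨hq, hx, hgt, hqc⟩
    rw [Set.eq_empty_iff_forall_notMem] at hempty
    exact hempty q hblk

/-- The coupled pair of heap processes. -/
noncomputable def cwalk (H₁ H₂ : Finset (Piece m)) (u : ℕ → ZMod m × Bool) :
    ℕ → Finset (Piece m) × Finset (Piece m)
  | 0 => (H₁, H₂)
  | n + 1 =>
    (step (cwalk H₁ H₂ u n).1 ((u n).1, (u n).2),
     step (cwalk H₁ H₂ u n).2
       ((u n).1, xor (eps (cwalk H₁ H₂ u n).1 (cwalk H₁ H₂ u n).2 (u n).1) (u n).2))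

/-- The draw-transformation coupling the two processes. -/
noncomputable def Phi (H₁ H₂ : Finset (Piece m)) (u : ℕ → ZMod m × Bool) (n : ℕ) :
    ZMod m × Bool :=
  ((u n).1, xor (eps (cwalk H₁ H₂ u n).1 (cwalk H₁ H₂ u n).2 (u n).1) (u n).2)

lemma cwalk_fst {H₁ H₂ : Finset (Piece m)} {u : ℕ → ZMod m × Bool} (n : ℕ) :
    (cwalk H₁ H₂ u n).1 = walk H₁ u n := by
  induction n with
  | zero => rfl
  | succ n ih => rw [cwalk, walk, ih]

lemma cwalk_snd {H₁ H₂ : Finset (Piece m)} {u : ℕ → ZMod m × Bool} (n : ℕ) :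
    (cwalk H₁ H₂ u n).2 = walk H₂ (Phi H₁ H₂ u) n := by
  induction n with
  | zero => rfl
  | succ n ih =>
    rw [walk, ← ih]
    rfl

lemma eps_comm {H H' : Finset (Piece m)} {k : ZMod m} : eps H H' k = eps H' H k := by
  rw [eps, eps]
  by_cases h : remH H k ∧ remH H' k ∧ topSign H k ≠ topSign H' k
  · rw [if_pos h, if_pos (show remH H' k ∧ remH H k ∧ topSign H' k ≠ topSign H k from
      ⟨h.2.1, h.1, h.2.2.symm⟩)]
  · rw [if_neg h, if_neg (show ¬ (remH H' k ∧ remH H k ∧ topSign H' k ≠ topSign H k) from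
      fun hc => h ⟨hc.2.1, hc.1, hc.2.2.symm⟩)]

lemma cwalk_swap {H₁ H₂ : Finset (Piece m)} {u : ℕ → ZMod m × Bool} (n : ℕ) :
    cwalk H₂ H₁ (Phi H₁ H₂ u) n = ((cwalk H₁ H₂ u n).2, (cwalk H₁ H₂ u n).1) := by
  induction n with
  | zero => rfl
  | succ n ih =>
    rw [cwalk, ih, cwalk]
    have h1 : (Phi H₁ H₂ u n).1 = (u n).1 := rfl
    have h2 : (Phi H₁ H₂ u n).2 =
        xor (eps (cwalk H₁ H₂ u n).1 (cwalk H₁ H₂ u n).2 (u n).1) (u n).2 := rfl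
    rw [h1, h2, Prod.mk.injEq]
    constructor
    · rfl
    · congr 1
      rw [eps_comm]
      cases eps (cwalk H₁ H₂ u n).1 (cwalk H₁ H₂ u n).2 (u n).1 <;> simp
      -- `xor e (xor e s) = s`

lemma Phi_invol {H₁ H₂ : Finset (Piece m)} (u : ℕ → ZMod m × Bool) :
    Phi H₂ H₁ (Phi H₁ H₂ u) = u := by
  funext n
  rw [Phi, cwalk_swap]
  have h1 : (Phi H₁ H₂ u n).1 = (u n).1 := rfl
  have h2 : (Phi H₁ H₂ u n).2 =
      xor (eps (cwalk H₁ H₂ u n).1 (cwalk H₁ H₂ u n).2 (u n).1) (u n).2 := rfl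
  rw [h1, h2, eps_comm]
  rw [Prod.ext_iff]
  refine ⟨rfl, ?_⟩
  show xor _ (xor _ _) = (u n).2
  cases eps (cwalk H₁ H₂ u n).1 (cwalk H₁ H₂ u n).2 (u n).1 <;> simp

lemma Phi_fst {H₁ H₂ : Finset (Piece m)} (u : ℕ → ZMod m × Bool) (n : ℕ) :
    (Phi H₁ H₂ u n).1 = (u n).1 := rfl

/-- The invariant holds along the coupled walk until simultaneous annihilation. -/
lemma sim_chain {x₁ x₂ : Piece m} {H₁ H₂ : Finset (Piece m)} {g₀ : Piece m → Piece m}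
    (hone : (1 : ZMod m) ≠ 0) (S₀ : Sim x₁ x₂ H₁ H₂ g₀) (u : ℕ → ZMod m × Bool) (n : ℕ) :
    (∃ gn, Sim x₁ x₂ (cwalk H₁ H₂ u n).1 (cwalk H₁ H₂ u n).2 gn) ∨
    (∃ t ≤ n, x₁ ∉ (cwalk H₁ H₂ u t).1 ∧ x₂ ∉ (cwalk H₁ H₂ u t).2) := by
  induction n with
  | zero => exact Or.inl ⟨g₀, S₀⟩
  | succ n ih =>
    rcases ih with ⟨gn, S⟩ | ⟨t, ht, h1, h2⟩
    · rcases S.step_couple hone (u n).1 (u n).2 with ⟨g', S'⟩ | ⟨h1, h2⟩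
      · exact Or.inl ⟨g', S'⟩
      · exact Or.inr ⟨n + 1, le_refl _, h1, h2⟩
    · exact Or.inr ⟨t, le_trans ht (Nat.le_succ _), h1, h2⟩

/-- During a run of 0's the invariant (plus cleanliness of column 0) persists. -/
lemma sim_chain0 {x₁ x₂ : Piece m} {H₁ H₂ : Finset (Piece m)} {g₀ : Piece m → Piece m}
    (hone : (1 : ZMod m) ≠ 0) (S₀ : Sim x₁ x₂ H₁ H₂ g₀)
    (hc1 : ∀ p ∈ H₁, p.col = 0 → p.height ≤ x₁.height)
    (hc2 : ∀ p ∈ H₂, p.col = 0 → p.height ≤ x₂.height)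
    (u : ℕ → ZMod m × Bool) (n : ℕ) (h0 : ∀ t < n, (u t).1 ≠ 0) :
    ∃ gn, Sim x₁ x₂ (cwalk H₁ H₂ u n).1 (cwalk H₁ H₂ u n).2 gn ∧
      (∀ p ∈ (cwalk H₁ H₂ u n).1, p.col = 0 → p.height ≤ x₁.height) ∧
      (∀ p ∈ (cwalk H₁ H₂ u n).2, p.col = 0 → p.height ≤ x₂.height) := by
  induction n with
  | zero => exact ⟨g₀, S₀, hc1, hc2⟩
  | succ n ih =>
    obtain ⟨gn, S, hcl1, hcl2⟩ := ih (fun t ht => h0 t (lt_trans ht (Nat.lt_succ_self _)))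
    have hk : (u n).1 ≠ 0 := h0 n (Nat.lt_succ_self _)
    have hx1col : x₁.col ≠ (u n).1 := by rw [S.cx]; exact fun h => hk h.symm
    have hx2col : x₂.col ≠ (u n).1 := by rw [S.cx']; exact fun h => hk h.symm
    rcases S.step_couple hone (u n).1 (u n).2 with ⟨g', S'⟩ | ⟨h1, -⟩
    · refine ⟨g', S', ?_, ?_⟩
      · intro p hp hpc
        rw [cwalk] at hp
        rw [mem_step_iff_of_col (by rw [hpc]; exact fun h => hk h.symm)] at hp
        exact hcl1 p hp hpc
      · intro p hp hpc
        rw [cwalk] at hp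
        rw [mem_step_iff_of_col (by rw [hpc]; exact fun h => hk h.symm)] at hp
        exact hcl2 p hp hpc
    · exfalso
      rw [mem_step_iff_of_col hx1col] at h1
      exact h1 S.mx

lemma walk_eq_of_prefix {H : Finset (Piece m)} {u v : ℕ → ZMod m × Bool} {n : ℕ}
    (h : ∀ i < n, u i = v i) : walk H u n = walk H v n := by
  induction n with
  | zero => rfl
  | succ n ih =>
    rw [walk, walk, ih (fun i hi => h i (lt_trans hi (Nat.lt_succ_self _))),
      h n (Nat.lt_succ_self _)]

lemma cwalk_eq_of_prefix {H₁ H₂ : Finset (Piece m)} {u v : ℕ → ZMod m × Bool} {n : ℕ}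
    (h : ∀ i < n, u i = v i) : cwalk H₁ H₂ u n = cwalk H₁ H₂ v n := by
  induction n with
  | zero => rfl
  | succ n ih =>
    rw [cwalk, cwalk, ih (fun i hi => h i (lt_trans hi (Nat.lt_succ_self _))),
      h n (Nat.lt_succ_self _)]

lemma Phi_eq_of_prefix {H₁ H₂ : Finset (Piece m)} {u v : ℕ → ZMod m × Bool} {n : ℕ}
    (h : ∀ i < n, u i = v i) : ∀ i < n, Phi H₁ H₂ u i = Phi H₁ H₂ v i := by
  intro i hi
  rw [Phi, Phi, cwalk_eq_of_prefix (fun j hj => h j (lt_trans hj hi)), h i hi]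

end RandomHeap
namespace RandomHeap

variable {m : ℕ}

lemma det_part1 {x₁ x₂ : Piece m} {H₁ H₂ : Finset (Piece m)} {g₀ : Piece m → Piece m}
    (hone : (1 : ZMod m) ≠ 0) (S₀ : Sim x₁ x₂ H₁ H₂ g₀)
    (hc1 : ∀ p ∈ H₁, p.col = 0 → p.height ≤ x₁.height)
    (hc2 : ∀ p ∈ H₂, p.col = 0 → p.height ≤ x₂.height)
    (u : ℕ → ZMod m × Bool) (n : ℕ) :
    (hasRoofPiece0 (walk H₁ u (n + 1)) ∧ ∀ t ≤ n, (u t).1 ≠ 0) ↔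
    (hasRoofPiece0 (walk H₂ (Phi H₁ H₂ u) (n + 1)) ∧ ∀ t ≤ n, (Phi H₁ H₂ u t).1 ≠ 0) := by
  by_cases h0 : ∀ t ≤ n, (u t).1 ≠ 0
  · obtain ⟨gn, S, hcl1, hcl2⟩ := sim_chain0 hone S₀ hc1 hc2 u (n + 1)
      (fun t ht => h0 t (Nat.lt_succ_iff.mp ht))
    rw [cwalk_fst (n + 1)] at S hcl1
    rw [cwalk_snd (n + 1)] at S hcl2
    have r1 : hasRoofPiece0 (walk H₁ u (n + 1)) ↔ CluS (walk H₁ u (n + 1)) x₁ = ∅ :=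
      roof0_iff S.isH S.mx S.cx hcl1
    have r2 : hasRoofPiece0 (walk H₂ (Phi H₁ H₂ u) (n + 1)) ↔
        CluS (walk H₂ (Phi H₁ H₂ u) (n + 1)) x₂ = ∅ :=
      roof0_iff S.isH' S.mx' S.cx' hcl2
    constructor
    · rintro ⟨hr, -⟩
      exact ⟨r2.2 (S.clu_empty_iff.1 (r1.1 hr)), fun t ht => h0 t ht⟩
    · rintro ⟨hr, -⟩
      exact ⟨r1.2 (S.clu_empty_iff.2 (r2.1 hr)), h0⟩
  · have h0' : ¬ ∀ t ≤ n, (Phi H₁ H₂ u t).1 ≠ 0 := fun hc => h0 (fun t ht => hc t ht)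
    exact iff_of_false (fun h => h0 h.2) (fun h => h0' h.2)

lemma det_part2 {x₁ x₂ : Piece m} {H₁ H₂ : Finset (Piece m)} {g₀ : Piece m → Piece m}
    (hone : (1 : ZMod m) ≠ 0) (S₀ : Sim x₁ x₂ H₁ H₂ g₀)
    (u : ℕ → ZMod m × Bool) (n : ℕ) :
    (∃ t ≤ n, x₁ ∉ walk H₁ u t) ↔ (∃ t ≤ n, x₂ ∉ walk H₂ (Phi H₁ H₂ u) t) := by
  constructor
  · rintro ⟨t, ht, hx⟩
    rcases sim_chain hone S₀ u t with ⟨gt, S⟩ | ⟨t', ht', h1, h2⟩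
    · exact absurd (by rw [← cwalk_fst t]; exact S.mx) hx
    · exact ⟨t', le_trans ht' ht, by rw [← cwalk_snd t']; exact h2⟩
  · rintro ⟨t, ht, hx⟩
    rcases sim_chain hone S₀ u t with ⟨gt, S⟩ | ⟨t', ht', h1, h2⟩
    · exact absurd (by rw [← cwalk_snd t]; exact S.mx') hx
    · exact ⟨t', le_trans ht' ht, by rw [← cwalk_fst t']; exact h1⟩

lemma degenerate_m {H : Finset (Piece m)} {x : Piece m} (hH : IsHeap H) (hx : x ∈ H)
    (hone : (1 : ZMod m) = 0) : False := by
  refine hH.2.2.2.1 x hx x hx ?_ rfl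
  rw [hone, add_zero]

end RandomHeap
namespace RandomHeap

variable {m : ℕ}

instance : Countable (ZMod m) := by
  cases m
  · exact (inferInstance : Countable ℤ)
  · exact (inferInstance : Countable (Fin _))

lemma measurableSet_singleton_D (d : ZMod m × Bool) : MeasurableSet {d} := by
  have h1 : MeasurableSet ({d.1} : Set (ZMod m)) := MeasurableSpace.measurableSet_top
  have h2 : MeasurableSet ({d.2} : Set Bool) := MeasurableSpace.measurableSet_top
  have he : ({d} : Set (ZMod m × Bool)) = Prod.fst ⁻¹' {d.1} ∩ Prod.snd ⁻¹' {d.2} := by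
    ext p
    simp [Prod.ext_iff]
  rw [he]
  exact (measurable_fst h1).inter (measurable_snd h2)

lemma measurableSet_prefix {k : ℕ} (A : Set (Fin k → ZMod m × Bool)) : MeasurableSet A := by
  have hsing : ∀ v : Fin k → ZMod m × Bool, MeasurableSet ({v} : Set (Fin k → ZMod m × Bool)) := by
    intro v
    have he : ({v} : Set (Fin k → ZMod m × Bool)) = ⋂ i, (fun f => f i) ⁻¹' {v i} := by
      ext f
      simp [funext_iff]
    rw [he]
    exact MeasurableSet.iInter (fun i => measurable_pi_apply i (measurableSet_singleton_D (v i)))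
  have he : A = ⋃ a ∈ A, {a} := by simp
  rw [he]
  exact MeasurableSet.biUnion (Set.to_countable A) (fun b _ => hsing b)

variable {Ω : Type*} [MeasurableSpace Ω] {P : Measure Ω} {U : ℕ → Ω → ZMod m × Bool}

lemma prob_cyl (hU : IIDUniformDraws P U) (n : ℕ) (v : ℕ → ZMod m × Bool) :
    P {ω | ∀ i < n, U i ω = v i} = (((2 * m : ℕ) : ℝ≥0∞)⁻¹) ^ n := by
  have heq : {ω | ∀ i < n, U i ω = v i} = ⋂ i ∈ Finset.range n, U i ⁻¹' {v i} := by
    ext ω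
    simp [Finset.mem_range]
  rw [heq, hU.2.1.measure_inter_preimage_eq_mul (Finset.range n)
    (sets := fun i => {v i}) (fun i _ => measurableSet_singleton_D (v i))]
  have hconst : ∀ i ∈ Finset.range n, P (U i ⁻¹' {v i}) = ((2 * m : ℕ) : ℝ≥0∞)⁻¹ := by
    intro i _
    have he : U i ⁻¹' {v i} = {ω | U i ω = v i} := by ext; simp
    rw [he, hU.2.2 i (v i)]
  rw [Finset.prod_congr rfl hconst, Finset.prod_const, Finset.card_range]

/-- Extend a finite draw prefix by junk. -/
noncomputable def extv {n : ℕ} (v : Fin n → ZMod m × Bool) : ℕ → ZMod m × Bool :=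
  fun i => if h : i < n then v ⟨i, h⟩ else (0, true)

lemma extv_lt {n : ℕ} (v : Fin n → ZMod m × Bool) {i : ℕ} (h : i < n) :
    extv v i = v ⟨i, h⟩ := dif_pos h

lemma prob_pre (hU : IIDUniformDraws P U) {n : ℕ} (S : Set (Fin n → ZMod m × Bool)) :
    P {ω | (fun i : Fin n => U i ω) ∈ S} =
      ∑' _ : S, (((2 * m : ℕ) : ℝ≥0∞)⁻¹) ^ n := by
  have hset : {ω | (fun i : Fin n => U i ω) ∈ S} =
      ⋃ v ∈ S, {ω | ∀ i : Fin n, U (i : ℕ) ω = v i} := by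
    ext ω
    constructor
    · intro h
      exact Set.mem_biUnion h (fun i => rfl)
    · intro h
      rw [Set.mem_iUnion₂] at h
      obtain ⟨v, hv, he⟩ := h
      have : (fun i : Fin n => U (i : ℕ) ω) = v := funext he
      show (fun i : Fin n => U (i : ℕ) ω) ∈ S
      rw [this]
      exact hv
  rw [hset, measure_biUnion (Set.to_countable S) ?_ ?_]
  · refine tsum_congr (fun v => ?_)
    have he : {ω | ∀ i : Fin n, U (i : ℕ) ω = v.1 i} = {ω | ∀ i < n, U i ω = extv v.1 i} := by
      ext ω
      constructor
      · intro h i hi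
        rw [extv_lt v.1 hi]
        exact h ⟨i, hi⟩
      · intro h i
        have := h i i.2
        rwa [extv_lt v.1 i.2] at this
    rw [he, prob_cyl hU n (extv v.1)]
  · intro v hv w hw hvw
    rw [Function.onFun, Set.disjoint_left]
    intro ω h1 h2
    exact hvw (funext (fun i => by rw [← h1 i, ← h2 i]))
  · intro v hv
    have he : {ω | ∀ i : Fin n, U (i : ℕ) ω = v i} = ⋂ i : Fin n, U (i : ℕ) ⁻¹' {v i} := by
      ext ω
      simp
    rw [he]
    exact MeasurableSet.iInter (fun i => hU.1 i (measurableSet_singleton_D (v i)))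

/-- Probabilities of prefix-determined events related by an adapted bijection agree. -/
lemma prob_iff_eq (hU : IIDUniformDraws P U) {n : ℕ}
    (Q₁ Q₂ : (ℕ → ZMod m × Bool) → Prop)
    (T T' : (ℕ → ZMod m × Bool) → (ℕ → ZMod m × Bool))
    (hdep₁ : ∀ u u', (∀ i < n, u i = u' i) → Q₁ u → Q₁ u')
    (hdep₂ : ∀ u u', (∀ i < n, u i = u' i) → Q₂ u → Q₂ u')
    (hT : ∀ u u', (∀ i < n, u i = u' i) → ∀ i < n, T u i = T u' i)
    (hT' : ∀ u u', (∀ i < n, u i = u' i) → ∀ i < n, T' u i = T' u' i)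
    (hTT' : ∀ u, T' (T u) = u) (hT'T : ∀ u, T (T' u) = u)
    (hQ : ∀ u, Q₁ u ↔ Q₂ (T u)) :
    P {ω | Q₁ (fun i => U i ω)} = P {ω | Q₂ (fun i => U i ω)} := by
  classical
  set S₁ : Set (Fin n → ZMod m × Bool) := {v | Q₁ (extv v)} with hS₁
  set S₂ : Set (Fin n → ZMod m × Bool) := {v | Q₂ (extv v)} with hS₂
  have hagree : ∀ (u : ℕ → ZMod m × Bool), ∀ i < n, u i = extv (fun j : Fin n => u j) i := by
    intro u i hi
    rw [extv_lt _ hi]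
  have h1 : {ω | Q₁ (fun i => U i ω)} = {ω | (fun i : Fin n => U i ω) ∈ S₁} := by
    ext ω
    exact ⟨fun h => hdep₁ _ _ (hagree (fun i => U i ω)) h,
      fun h => hdep₁ _ _ (fun i hi => (hagree (fun i => U i ω) i hi).symm) h⟩
  have h2 : {ω | Q₂ (fun i => U i ω)} = {ω | (fun i : Fin n => U i ω) ∈ S₂} := by
    ext ω
    exact ⟨fun h => hdep₂ _ _ (hagree (fun i => U i ω)) h,
      fun h => hdep₂ _ _ (fun i hi => (hagree (fun i => U i ω) i hi).symm) h⟩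
  rw [h1, h2, prob_pre hU S₁, prob_pre hU S₂]
  set ψ : (Fin n → ZMod m × Bool) → (Fin n → ZMod m × Bool) :=
    fun v i => T (extv v) i with hψ
  set ψ' : (Fin n → ZMod m × Bool) → (Fin n → ZMod m × Bool) :=
    fun v i => T' (extv v) i with hψ'
  have hψag : ∀ v, ∀ i < n, extv (ψ v) i = T (extv v) i := by
    intro v i hi
    rw [extv_lt _ hi]
  have hψag' : ∀ v, ∀ i < n, extv (ψ' v) i = T' (extv v) i := by
    intro v i hi
    rw [extv_lt _ hi]
  have hmem : ∀ v, v ∈ S₁ ↔ ψ v ∈ S₂ := by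
    intro v
    rw [hS₁, hS₂, Set.mem_setOf_eq, Set.mem_setOf_eq, hQ (extv v)]
    constructor
    · intro h
      exact hdep₂ _ _ (fun i hi => (hψag v i hi).symm) h
    · intro h
      exact hdep₂ _ _ (hψag v) h
  have hinv : ∀ v, ψ' (ψ v) = v := by
    intro v
    funext i
    show T' (extv (ψ v)) i = v i
    rw [hT' (extv (ψ v)) (T (extv v)) (hψag v) i i.2, hTT', extv_lt _ i.2]
  have hinv' : ∀ v, ψ (ψ' v) = v := by
    intro v
    funext i
    show T (extv (ψ' v)) i = v i
    rw [hT (extv (ψ' v)) (T' (extv v)) (hψag' v) i i.2, hT'T, extv_lt _ i.2]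
  have hmem' : ∀ w, w ∈ S₂ → ψ' w ∈ S₁ := by
    intro w hw
    rw [hmem (ψ' w), hinv' w]
    exact hw
  have e : S₁ ≃ S₂ :=
    { toFun := fun v => ⟨ψ v.1, (hmem v.1).1 v.2⟩
      invFun := fun w => ⟨ψ' w.1, hmem' w.1 w.2⟩
      left_inv := fun v => Subtype.ext (hinv v.1)
      right_inv := fun w => Subtype.ext (hinv' w.1) }
  exact Equiv.tsum_eq e (fun _ => (((2 * m : ℕ) : ℝ≥0∞)⁻¹) ^ n)

end RandomHeap
namespace RandomHeap

variable {m : ℕ} {Ω : Type*} [MeasurableSpace Ω] {P : Measure Ω}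
  {U : ℕ → Ω → ZMod m × Bool}

lemma measurable_event (hU : IIDUniformDraws P U) {n : ℕ} (Q : (ℕ → ZMod m × Bool) → Prop)
    (hdep : ∀ u u', (∀ i < n, u i = u' i) → Q u → Q u') :
    MeasurableSet {ω | Q (fun i => U i ω)} := by
  have hagree : ∀ (u : ℕ → ZMod m × Bool), ∀ i < n, u i = extv (fun j : Fin n => u j) i := by
    intro u i hi
    rw [extv_lt _ hi]
  have h1 : {ω | Q (fun i => U i ω)} =
      (fun ω => (fun i : Fin n => U i ω)) ⁻¹' {v | Q (extv v)} := by
    ext ω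
    exact ⟨fun h => hdep _ _ (hagree (fun i => U i ω)) h,
      fun h => hdep _ _ (fun i hi => (hagree (fun i => U i ω) i hi).symm) h⟩
  rw [h1]
  have hmeas : Measurable (fun ω => (fun i : Fin n => U (i : ℕ) ω)) :=
    measurable_pi_lambda _ (fun i => hU.1 (i : ℕ))
  exact hmeas (measurableSet_prefix _)

end RandomHeap

/-- Suppose the heaps `H₁` and `H₂` are such that the sets of pieces
blocking the highest piece of column `0` in `H₁` and in `H₂` have the same configuration,
i.e. correspond under a bijection preserving columns and the blocking relation.  Then the
probability that a run of 0's started from `H₁` backtracks equals the probability that a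
run of 0's started from `H₂` backtracks, and for every future time `n` the probability
that the highest piece of column `0` has been annihilated by time `n` is the same for the
process started from `H₁` as for the process started from `H₂`.

Backtracking is the event that the run of 0's is terminated (the roof acquires a piece in
column 0) without any piece having fallen in column 0; annihilation of the marked piece by
time `n` is the event that it has left the heap by time `n`. -/
theorem blocking_configuration_invariance (m : ℕ)
    {Ω : Type*} [MeasurableSpace Ω] (P : Measure Ω) [IsProbabilityMeasure P]
    (U : ℕ → Ω → ZMod m × Bool) (hU : IIDUniformDraws P U)
    (H₁ H₂ : Finset (Piece m)) (hH₁ : IsHeap H₁) (hH₂ : IsHeap H₂)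
    (x₁ x₂ : Piece m)
    (hx₁ : x₁ ∈ H₁ ∧ x₁.col = 0 ∧ x₁.height = colHeight H₁ 0)
    (hx₂ : x₂ ∈ H₂ ∧ x₂.col = 0 ∧ x₂.height = colHeight H₂ 0)
    (hblocked : ∃ y, Blocks H₁ y x₁)
    (f : Piece m → Piece m)
    (hbij : Set.BijOn f {y | Blocks H₁ y x₁} {y | Blocks H₂ y x₂})
    (hcol : ∀ y, Blocks H₁ y x₁ → (f y).col = y.col)
    (hrel : ∀ y z, Blocks H₁ y x₁ → Blocks H₁ z x₁ →
      (Blocks H₁ y z ↔ Blocks H₂ (f y) (f z))) :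
    (P {ω | ∃ n : ℕ, hasRoofPiece0 (walk H₁ (fun i => U i ω) (n + 1)) ∧
          ∀ t ≤ n, (U t ω).1 ≠ 0}
      = P {ω | ∃ n : ℕ, hasRoofPiece0 (walk H₂ (fun i => U i ω) (n + 1)) ∧
          ∀ t ≤ n, (U t ω).1 ≠ 0}) ∧
    ∀ n : ℕ,
      P {ω | ∃ t ≤ n, x₁ ∉ walk H₁ (fun i => U i ω) t}
        = P {ω | ∃ t ≤ n, x₂ ∉ walk H₂ (fun i => U i ω) t} := by
  classical
  obtain ⟨hx1m, hx1c, hx1h⟩ := hx₁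
  obtain ⟨hx2m, hx2c, hx2h⟩ := hx₂
  by_cases hone : (1 : ZMod m) = 0
  · exact (degenerate_m hH₁ hx1m hone).elim
  · -- the initial coupling invariant
    set g₀ : Piece m → Piece m := Function.update f x₁ x₂ with hg₀
    have hx1clu : ∀ y, Blocks H₁ y x₁ → y ≠ x₁ := by
      intro y hy he
      exact blocks_irrefl (he ▸ hy)
    have hupd : ∀ y, Blocks H₁ y x₁ → g₀ y = f y := fun y hy =>
      Function.update_of_ne (hx1clu y hy) _ _
    have S₀ : Sim x₁ x₂ H₁ H₂ g₀ := by
      refine ⟨hH₁, hH₂, hx1m, hx2m, hx1c, hx2c, Function.update_self _ _ _, ?_, ?_, ?_⟩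
      · exact Set.BijOn.congr hbij (fun y hy => (hupd y hy).symm)
      · intro y hy
        rw [hupd y hy]
        exact hcol y hy
      · intro y z hy hz
        rw [hupd y hy, hupd z hz]
        exact hrel y z hy hz
    have hc1 : ∀ p ∈ H₁, p.col = 0 → p.height ≤ x₁.height := by
      intro p hp hpc
      rw [hx1h]
      exact hpc ▸ height_le_colHeight hp
    have hc2 : ∀ p ∈ H₂, p.col = 0 → p.height ≤ x₂.height := by
      intro p hp hpc
      rw [hx2h]
      exact hpc ▸ height_le_colHeight hp
    constructor
    · -- Part 1: the backtracking probabilities agree.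
      set A₁ : ℕ → (ℕ → ZMod m × Bool) → Prop :=
        fun n u => hasRoofPiece0 (walk H₁ u (n + 1)) ∧ ∀ t ≤ n, (u t).1 ≠ 0 with hA₁
      set A₂ : ℕ → (ℕ → ZMod m × Bool) → Prop :=
        fun n u => hasRoofPiece0 (walk H₂ u (n + 1)) ∧ ∀ t ≤ n, (u t).1 ≠ 0 with hA₂
      have hA₁dep : ∀ j (u u' : ℕ → ZMod m × Bool), (∀ i < j + 1, u i = u' i) →
          A₁ j u → A₁ j u' := by
        rintro j u u' hag ⟨h1, h2⟩
        refine ⟨by rwa [walk_eq_of_prefix (fun i hi => (hag i hi).symm)], ?_⟩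
        intro t ht
        rw [← hag t (Nat.lt_succ_of_le ht)]
        exact h2 t ht
      have hA₂dep : ∀ j (u u' : ℕ → ZMod m × Bool), (∀ i < j + 1, u i = u' i) →
          A₂ j u → A₂ j u' := by
        rintro j u u' hag ⟨h1, h2⟩
        refine ⟨by rwa [walk_eq_of_prefix (fun i hi => (hag i hi).symm)], ?_⟩
        intro t ht
        rw [← hag t (Nat.lt_succ_of_le ht)]
        exact h2 t ht
      set B₁ : ℕ → (ℕ → ZMod m × Bool) → Prop :=
        fun n u => A₁ n u ∧ ∀ j < n, ¬ A₁ j u with hB₁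
      set B₂ : ℕ → (ℕ → ZMod m × Bool) → Prop :=
        fun n u => A₂ n u ∧ ∀ j < n, ¬ A₂ j u with hB₂
      have hEB₁ : ∀ u : ℕ → ZMod m × Bool, (∃ n, A₁ n u) ↔ (∃ n, B₁ n u) := by
        intro u
        constructor
        · intro h
          exact ⟨Nat.find h, Nat.find_spec h, fun j hj => Nat.find_min h hj⟩
        · rintro ⟨n, hnA, -⟩
          exact ⟨n, hnA⟩
      have hEB₂ : ∀ u : ℕ → ZMod m × Bool, (∃ n, A₂ n u) ↔ (∃ n, B₂ n u) := by
        intro u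
        constructor
        · intro h
          exact ⟨Nat.find h, Nat.find_spec h, fun j hj => Nat.find_min h hj⟩
        · rintro ⟨n, hnA, -⟩
          exact ⟨n, hnA⟩
      have hset1 : {ω | ∃ n : ℕ, hasRoofPiece0 (walk H₁ (fun i => U i ω) (n + 1)) ∧
          ∀ t ≤ n, (U t ω).1 ≠ 0} = ⋃ n, {ω | B₁ n (fun i => U i ω)} := by
        ext ω
        rw [Set.mem_iUnion]
        exact hEB₁ (fun i => U i ω)
      have hset2 : {ω | ∃ n : ℕ, hasRoofPiece0 (walk H₂ (fun i => U i ω) (n + 1)) ∧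
          ∀ t ≤ n, (U t ω).1 ≠ 0} = ⋃ n, {ω | B₂ n (fun i => U i ω)} := by
        ext ω
        rw [Set.mem_iUnion]
        exact hEB₂ (fun i => U i ω)
      have hB₁dep : ∀ n (u u' : ℕ → ZMod m × Bool), (∀ i < n + 1, u i = u' i) →
          B₁ n u → B₁ n u' := by
        rintro n u u' hag ⟨h1, h2⟩
        refine ⟨hA₁dep n u u' hag h1, ?_⟩
        intro j hj hA
        exact h2 j hj (hA₁dep j u' u
          (fun i hi => (hag i (lt_of_lt_of_le hi (Nat.succ_le_succ (le_of_lt hj)))).symm) hA)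
      have hB₂dep : ∀ n (u u' : ℕ → ZMod m × Bool), (∀ i < n + 1, u i = u' i) →
          B₂ n u → B₂ n u' := by
        rintro n u u' hag ⟨h1, h2⟩
        refine ⟨hA₂dep n u u' hag h1, ?_⟩
        intro j hj hA
        exact h2 j hj (hA₂dep j u' u
          (fun i hi => (hag i (lt_of_lt_of_le hi (Nat.succ_le_succ (le_of_lt hj)))).symm) hA)
      have hdisj1 : Pairwise (Function.onFun Disjoint (fun n => {ω | B₁ n (fun i => U i ω)})) := by
        intro a b hab
        rw [Function.onFun, Set.disjoint_left]
        intro ω h1 h2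
        rcases lt_or_gt_of_ne hab with h | h
        · exact h2.2 a h h1.1
        · exact h1.2 b h h2.1
      have hdisj2 : Pairwise (Function.onFun Disjoint (fun n => {ω | B₂ n (fun i => U i ω)})) := by
        intro a b hab
        rw [Function.onFun, Set.disjoint_left]
        intro ω h1 h2
        rcases lt_or_gt_of_ne hab with h | h
        · exact h2.2 a h h1.1
        · exact h1.2 b h h2.1
      rw [hset1, hset2,
        measure_iUnion hdisj1 (fun n => measurable_event hU (B₁ n) (hB₁dep n)),
        measure_iUnion hdisj2 (fun n => measurable_event hU (B₂ n) (hB₂dep n))]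
      refine tsum_congr (fun n => ?_)
      refine prob_iff_eq hU (B₁ n) (B₂ n) (Phi H₁ H₂) (Phi H₂ H₁) (hB₁dep n) (hB₂dep n)
        (fun u u' h => Phi_eq_of_prefix h) (fun u u' h => Phi_eq_of_prefix h)
        (fun u => Phi_invol u) (fun u => Phi_invol u) ?_
      intro u
      have hjiff : ∀ j, A₁ j u ↔ A₂ j (Phi H₁ H₂ u) := by
        intro j
        exact det_part1 hone S₀ hc1 hc2 u j
      rw [hB₁, hB₂]
      constructor
      · rintro ⟨h1, h2⟩
        exact ⟨(hjiff n).1 h1, fun j hj hA => h2 j hj ((hjiff j).2 hA)⟩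
      · rintro ⟨h1, h2⟩
        exact ⟨(hjiff n).2 h1, fun j hj hA => h2 j hj ((hjiff j).1 hA)⟩
    · -- Part 2: annihilation probabilities agree.
      intro n
      have hdep1 : ∀ (u u' : ℕ → ZMod m × Bool), (∀ i < n, u i = u' i) →
          (∃ t ≤ n, x₁ ∉ walk H₁ u t) → (∃ t ≤ n, x₁ ∉ walk H₁ u' t) := by
        rintro u u' hag ⟨t, ht, hx⟩
        rcases eq_or_lt_of_le ht with rfl | hlt
        · exact ⟨t, le_refl _, by
            rwa [walk_eq_of_prefix (fun i hi => (hag i hi).symm)]⟩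
        · exact ⟨t, ht, by
            rwa [walk_eq_of_prefix (fun i hi => (hag i (lt_trans hi hlt)).symm)]⟩
      have hdep2 : ∀ (u u' : ℕ → ZMod m × Bool), (∀ i < n, u i = u' i) →
          (∃ t ≤ n, x₂ ∉ walk H₂ u t) → (∃ t ≤ n, x₂ ∉ walk H₂ u' t) := by
        rintro u u' hag ⟨t, ht, hx⟩
        rcases eq_or_lt_of_le ht with rfl | hlt
        · exact ⟨t, le_refl _, by
            rwa [walk_eq_of_prefix (fun i hi => (hag i hi).symm)]⟩
        · exact ⟨t, ht, by
            rwa [walk_eq_of_prefix (fun i hi => (hag i (lt_trans hi hlt)).symm)]⟩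
      exact prob_iff_eq hU (fun u => ∃ t ≤ n, x₁ ∉ walk H₁ u t)
        (fun u => ∃ t ≤ n, x₂ ∉ walk H₂ u t) (Phi H₁ H₂) (Phi H₂ H₁) hdep1 hdep2
        (fun u u' h => Phi_eq_of_prefix h) (fun u u' h => Phi_eq_of_prefix h)
        (fun u => Phi_invol u) (fun u => Phi_invol u)
        (fun u => det_part2 hone S₀ u n)
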